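/- arXiv:2002.08638 — 4 statements merged into one kernel-verified Lean document; each statement's English description precedes it below -/
import Mathlib

section
/- If M is a nonempty compact connected locally connected metric space, then M is the continuous image of the unit interval [0,1]; conversely, any Hausdorff continuous image of [0,1] is a compact, connected, locally connected metric space. -/
set_option linter.unusedSectionVars false
set_option maxHeartbeats 1000000

open List Set Topology Filter

section HahnMazurkiewicz

variable {M : Type} [MetricSpace M]

/-- A "segment": finite chain of points from `x` to `y` with small steps, staying within `D` of `x`. -/
def HMSeg (η D : ℝ) (x y : M) (l : List M) : Prop :=
  l.head? = some x ∧ l.getLast? = some y ∧ l.Chain' (fun a b => dist a b < η) ∧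
    ∀ a ∈ l, dist a x ≤ D

namespace HMSeg

lemma ne_nil {η D x y} {l : List M} (h : HMSeg η D x y l) : l ≠ [] := by
  intro hl; subst hl; simpa using h.1

lemma mem_head {η D x y} {l : List M} (h : HMSeg η D x y l) : x ∈ l := by
  have := h.1
  cases l with
  | nil => simp at this
  | cons a l => simp at this; simp [this]

lemma mem_last {η D x y} {l : List M} (h : HMSeg η D x y l) : y ∈ l := by
  have h2 := h.2.1
  rw [List.getLast?_eq_getLast h.ne_nil] at h2
  have := List.getLast_mem h.ne_nil
  rwa [Option.some_inj.1 h2] at this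

lemma mono {η D D' x y} {l : List M} (h : HMSeg η D x y l) (hD : D ≤ D') :
    HMSeg η D' x y l :=
  ⟨h.1, h.2.1, h.2.2.1, fun a ha => le_trans (h.2.2.2 a ha) hD⟩

lemma single (x : M) {η D : ℝ} (hD : 0 ≤ D) : HMSeg η D x x [x] := by
  refine ⟨rfl, rfl, List.isChain_singleton _, ?_⟩
  simp [hD]

lemma append {η D₁ D₂ x y w} {l₁ l₂ : List M} (hη : 0 < η)
    (h₁ : HMSeg η D₁ x y l₁) (h₂ : HMSeg η D₂ y w l₂) :
    HMSeg η (D₁ + D₂) x w (l₁ ++ l₂) := by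
  refine ⟨?_, ?_, ?_, ?_⟩
  · rw [List.head?_append, h₁.1]; rfl
  · rw [List.getLast?_append, h₂.2.1]; rfl
  · unfold List.Chain'; rw [List.isChain_append]
    refine ⟨h₁.2.2.1, h₂.2.2.1, ?_⟩
    intro a ha b hb
    rw [h₁.2.1] at ha; rw [h₂.1] at hb
    simp only [Option.mem_def, Option.some_inj] at ha hb
    subst ha; subst hb; simpa using hη
  · intro a ha
    rcases List.mem_append.1 ha with h | h
    · have hD₂ : 0 ≤ D₂ := by simpa using h₂.2.2.2 y h₂.mem_head
      exact le_trans (h₁.2.2.2 a h) (by linarith)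
    · calc dist a x ≤ dist a y + dist y x := dist_triangle a y x
        _ ≤ D₂ + D₁ := add_le_add (h₂.2.2.2 a h) (h₁.2.2.2 y h₁.mem_last)
        _ = D₁ + D₂ := by ring

lemma loop_append {η D₁ D₂ x w} {l₁ l₂ : List M} (hη : 0 < η)
    (h₁ : HMSeg η D₁ x x l₁) (h₂ : HMSeg η D₂ x w l₂) :
    HMSeg η (max D₁ D₂) x w (l₁ ++ l₂) := by
  refine ⟨?_, ?_, ?_, ?_⟩
  · rw [List.head?_append, h₁.1]; rfl
  · rw [List.getLast?_append, h₂.2.1]; rfl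
  · unfold List.Chain'; rw [List.isChain_append]
    refine ⟨h₁.2.2.1, h₂.2.2.1, ?_⟩
    intro a ha b hb
    rw [h₁.2.1] at ha; rw [h₂.1] at hb
    simp only [Option.mem_def, Option.some_inj] at ha hb
    subst ha; subst hb; simpa using hη
  · intro a ha
    rcases List.mem_append.1 ha with h | h
    · exact le_trans (h₁.2.2.2 a h) (le_max_left _ _)
    · exact le_trans (h₂.2.2.2 a h) (le_max_right _ _)

lemma pad {η D x y} {l : List M} (hη : 0 < η) (h : HMSeg η D x y l) (n : ℕ) :
    HMSeg η D x y (List.replicate n x ++ l) := by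
  induction n with
  | zero => simpa using h
  | succ n ih =>
    have : List.replicate (n+1) x ++ l = [x] ++ (List.replicate n x ++ l) := by
      simp [List.replicate_succ]
    rw [this]
    have hD : 0 ≤ D := le_trans dist_nonneg (h.2.2.2 x h.mem_head)
    have := loop_append hη (single x hD) ih
    simpa using this

end HMSeg

def HMChainIn (η : ℝ) (A : Set M) (x y : M) (l : List M) : Prop :=
  l.head? = some x ∧ l.getLast? = some y ∧ l.Chain' (fun a b => dist a b < η) ∧
    ∀ a ∈ l, a ∈ A

lemma hmChainIn_snoc {η : ℝ} {A : Set M} {x y w : M} {l : List M}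
    (h : HMChainIn η A x y l) (hw : w ∈ A) (hd : dist y w < η) :
    HMChainIn η A x w (l ++ [w]) := by
  have hnil : l ≠ [] := by intro hl; subst hl; simpa using h.1
  refine ⟨?_, ?_, ?_, ?_⟩
  · rw [List.head?_append, h.1]; rfl
  · simp
  · unfold List.Chain'; rw [List.isChain_append]
    refine ⟨h.2.2.1, by simp, ?_⟩
    intro a ha b hb
    rw [h.2.1] at ha
    simp only [Option.mem_def, Option.some_inj] at ha
    simp only [List.head?_cons, Option.mem_def, Option.some_inj] at hb
    subst ha; subst hb; exact hd
  · intro a ha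
    rcases List.mem_append.1 ha with hh | hh
    · exact h.2.2.2 a hh
    · simp at hh; subst hh; exact hw

/-- In a preconnected set, any two points are joined by an `η`-chain inside the set. -/
lemma IsPreconnected.exists_hmChainIn {A : Set M} (hA : IsPreconnected A)
    {x y : M} (hx : x ∈ A) (hy : y ∈ A) {η : ℝ} (hη : 0 < η) :
    ∃ l, HMChainIn η A x y l := by
  set T : Set M := {z | z ∈ A ∧ ∃ l, HMChainIn η A x z l} with hT
  have hxT : x ∈ T := ⟨hx, [x], rfl, rfl, List.isChain_singleton _, by simpa using hx⟩
  set U : Set M := ⋃ p ∈ T, Metric.ball p η with hU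
  set V : Set M := ⋃ p ∈ A \ T, Metric.ball p η with hV
  have hUopen : IsOpen U := isOpen_biUnion fun _ _ => Metric.isOpen_ball
  have hVopen : IsOpen V := isOpen_biUnion fun _ _ => Metric.isOpen_ball
  have hcover : A ⊆ U ∪ V := by
    intro z hz
    by_cases hzT : z ∈ T
    · exact Or.inl (mem_biUnion hzT (Metric.mem_ball_self hη))
    · exact Or.inr (mem_biUnion ⟨hz, hzT⟩ (Metric.mem_ball_self hη))
  have hTU : ∀ z ∈ A, z ∈ U → z ∈ T := by
    intro z hz hzU
    obtain ⟨p, hpT, hzp⟩ := mem_iUnion₂.1 hzU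
    obtain ⟨l, hl⟩ := hpT.2
    exact ⟨hz, l ++ [z], hmChainIn_snoc hl hz (by rwa [Metric.mem_ball, dist_comm] at hzp)⟩
  have hVempty : ¬ (A ∩ V).Nonempty := by
    intro hVne
    obtain ⟨w, hwA, hwUV⟩ := hA U V hUopen hVopen hcover
      ⟨x, hxT.1, mem_biUnion hxT (Metric.mem_ball_self hη)⟩ hVne
    obtain ⟨p₂, hp₂, hwp₂⟩ := mem_iUnion₂.1 hwUV.2
    have hwT : w ∈ T := hTU w hwA hwUV.1
    obtain ⟨l, hl⟩ := hwT.2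
    exact hp₂.2 ⟨hp₂.1, l ++ [p₂], hmChainIn_snoc hl hp₂.1
      (by rwa [Metric.mem_ball] at hwp₂)⟩
  have hyU : y ∈ U := by
    rcases hcover hy with h | h
    · exact h
    · exact absurd ⟨y, hy, h⟩ hVempty
  exact (hTU y hy hyU).2

def HMGood (δ : ℕ → ℝ) (k N : ℕ) (p : ℕ → M) : Prop :=
  1 ≤ N ∧ (∀ j, j + 1 < N → dist (p j) (p (j+1)) < δ k) ∧
    (∀ y : M, ∃ j < N, dist y (p j) < δ (k+1))

lemma hm_net [CompactSpace M] {r : ℝ} (hr : 0 < r) :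
    ∃ Z : Finset M, ∀ y : M, ∃ z ∈ Z, dist y z < r := by
  have h := (isCompact_univ (X := M)).totallyBounded
  rw [Metric.totallyBounded_iff] at h
  obtain ⟨t, htfin, hts⟩ := h r hr
  refine ⟨htfin.toFinset, fun y => ?_⟩
  obtain ⟨z, hz, hyz⟩ := mem_iUnion₂.1 (hts (mem_univ y))
  exact ⟨z, htfin.mem_toFinset.2 hz, by rwa [Metric.mem_ball] at hyz⟩

lemma hmChainIn_append {η : ℝ} {A : Set M} {x y w : M} {l₁ l₂ : List M} (hη : 0 < η)
    (h₁ : HMChainIn η A x y l₁) (h₂ : HMChainIn η A y w l₂) :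
    HMChainIn η A x w (l₁ ++ l₂) := by
  refine ⟨?_, ?_, ?_, ?_⟩
  · rw [List.head?_append, h₁.1]; rfl
  · rw [List.getLast?_append, h₂.2.1]; rfl
  · unfold List.Chain'; rw [List.isChain_append]
    refine ⟨h₁.2.2.1, h₂.2.2.1, ?_⟩
    intro a ha b hb
    rw [h₁.2.1] at ha; rw [h₂.1] at hb
    simp only [Option.mem_def, Option.some_inj] at ha hb
    subst ha; subst hb; simpa using hη
  · intro a ha
    rcases List.mem_append.1 ha with h | h
    · exact h₁.2.2.2 a h
    · exact h₂.2.2.2 a h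

lemma hmChainIn_mem_last {η : ℝ} {A : Set M} {x y : M} {l : List M}
    (h : HMChainIn η A x y l) : y ∈ l := by
  have hnil : l ≠ [] := by intro hl; subst hl; simpa using h.1
  have h2 := h.2.1
  rw [List.getLast?_eq_getLast hnil] at h2
  have := List.getLast_mem hnil
  rwa [Option.some_inj.1 h2] at this

lemma hm_base [CompactSpace M] [ConnectedSpace M] [Nonempty M]
    (δ : ℕ → ℝ) (hδpos : ∀ k, 0 < δ k) :
    ∃ N p, HMGood (M := M) δ 0 N p := by
  obtain ⟨Z, hZ⟩ := hm_net (M := M) (hδpos 1)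
  inhabit M
  have key : ∀ zs : List M, ∀ x : M, ∃ l : List M, ∃ y' : M,
      HMChainIn (δ 0) univ x y' l ∧ ∀ z ∈ zs, z ∈ l := by
    intro zs
    induction zs with
    | nil => exact fun x => ⟨[x], x, ⟨rfl, rfl, List.isChain_singleton _, by simp⟩, by simp⟩
    | cons z zs ih =>
      intro x
      obtain ⟨c, hc⟩ := IsPreconnected.exists_hmChainIn (isPreconnected_univ (α := M)) (mem_univ x) (mem_univ z)
        (hδpos 0)
      obtain ⟨l, y', hl, hmem⟩ := ih z
      refine ⟨c ++ l, y', hmChainIn_append (hδpos 0) hc hl, ?_⟩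
      intro w hw
      rcases List.mem_cons.1 hw with h | h
      · subst h; exact List.mem_append_left _ (hmChainIn_mem_last hc)
      · exact List.mem_append_right _ (hmem w h)
  obtain ⟨l, y', hl, hmem⟩ := key Z.toList default
  have hnil : l ≠ [] := by intro h0; subst h0; simpa using hl.1
  refine ⟨l.length, fun j => l.getD j default, List.length_pos_iff.2 hnil, ?_, ?_⟩
  · intro j hj
    have hchain := hl.2.2.1
    unfold List.Chain' at hchain; rw [List.isChain_iff_getElem] at hchain
    have := hchain j (by omega)
    show dist (l.getD j default) (l.getD (j+1) default) < δ 0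
    rwa [List.getD_eq_getElem _ _ (by omega : j < l.length),
      List.getD_eq_getElem _ _ (by omega : j + 1 < l.length)]
  · intro y
    obtain ⟨z, hzZ, hyz⟩ := hZ y
    have hzl : z ∈ l := hmem z (Finset.mem_toList.2 hzZ)
    obtain ⟨⟨j, hj⟩, hget⟩ := List.mem_iff_get.1 hzl
    refine ⟨j, hj, ?_⟩
    show dist y (l.getD j default) < δ 1
    rwa [List.getD_eq_get _ _ ⟨j, hj⟩, hget]

lemma hm_exists_seq {α : Type} (P : ℕ → α → Prop) (R : ℕ → α → α → Prop)
    (h0 : ∃ a, P 0 a) (hs : ∀ k a, P k a → ∃ b, P (k+1) b ∧ R k a b) :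
    ∃ f : ℕ → α, (∀ k, P k (f k)) ∧ ∀ k, R k (f k) (f (k+1)) := by
  choose g hg1 hg2 using hs
  let F : ∀ k : ℕ, {a // P k a} := fun k =>
    Nat.rec ⟨h0.choose, h0.choose_spec⟩ (fun k ih => ⟨g k ih.1 ih.2, hg1 k ih.1 ih.2⟩) k
  exact ⟨fun k => (F k).1, fun k => (F k).2, fun k => hg2 k (F k).1 (F k).2⟩

lemma hm_unif [CompactSpace M] [LocallyConnectedSpace M] {ε : ℝ} (hε : 0 < ε) :
    ∃ δ, 0 < δ ∧ δ ≤ ε ∧ ∀ x y : M, dist x y < δ → ∀ η, 0 < η →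
      ∃ l, HMSeg η ε x y l := by
  have hball : ∀ z : M, Metric.ball z (ε/2) ∈ 𝓝 z :=
    fun z => Metric.ball_mem_nhds z (by linarith)
  have h := locallyConnectedSpace_iff_subsets_isOpen_isConnected.1 ‹LocallyConnectedSpace M›
  choose V hVsub hVopen hVmem hVconn using fun z : M => h z _ (hball z)
  obtain ⟨δ₀, hδ₀, hleb⟩ := lebesgue_number_lemma_of_metric isCompact_univ hVopen
    (fun z _ => mem_iUnion.2 ⟨z, hVmem z⟩)
  refine ⟨min δ₀ ε, lt_min hδ₀ hε, min_le_right _ _, ?_⟩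
  intro x y hxy η hη
  obtain ⟨z, hz⟩ := hleb x (mem_univ x)
  have hxV : x ∈ V z := hz (Metric.mem_ball_self (lt_of_le_of_lt (dist_nonneg) (lt_of_lt_of_le hxy (min_le_left _ _))))
  have hyV : y ∈ V z := hz (by rw [Metric.mem_ball, dist_comm]; exact lt_of_lt_of_le hxy (min_le_left _ _))
  obtain ⟨l, hl⟩ := IsPreconnected.exists_hmChainIn (hVconn z).isPreconnected hxV hyV hη
  refine ⟨l, hl.1, hl.2.1, hl.2.2.1, ?_⟩
  intro a ha
  have ha' := hVsub z (hl.2.2.2 a ha)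
  have hx' := hVsub z hxV
  rw [Metric.mem_ball] at ha' hx'
  calc dist a x ≤ dist a z + dist z x := dist_triangle a z x
    _ ≤ ε/2 + ε/2 := by rw [dist_comm z x]; exact add_le_add ha'.le hx'.le
    _ = ε := by ring

lemma hm_foldr_seg {η D : ℝ} {x w : M} (hη : 0 < η) (f : M → List M) (zs : List M)
    (hf : ∀ z ∈ zs, HMSeg η D x x (f z)) {rest : List M} (hrest : HMSeg η D x w rest) :
    HMSeg η D x w (zs.foldr (fun z acc => f z ++ acc) rest) := by
  induction zs with
  | nil => exact hrest
  | cons a zs ih =>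
    simp only [List.foldr_cons]
    have := (hf a List.mem_cons_self).loop_append hη
      (ih (fun z hz => hf z (List.mem_cons_of_mem a hz)))
    simpa [max_self] using this

lemma hm_mem_foldr_append {f : M → List M} {rest zs : List M} {z : M} (hz : z ∈ zs)
    (hmem : z ∈ f z) : z ∈ zs.foldr (fun a acc => f a ++ acc) rest := by
  induction zs with
  | nil => simp at hz
  | cons a zs ih =>
    simp only [List.foldr_cons, List.mem_append]
    rcases List.mem_cons.1 hz with h | h
    · subst h; exact Or.inl hmem
    · exact Or.inr (ih h)

lemma hm_getD_zero {l : List M} {x d : M} (h : l.head? = some x) : l.getD 0 d = x := by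
  cases l with
  | nil => simp at h
  | cons a l => simp at h; simp [h]

lemma hm_getD_last {l : List M} {x d : M} {m : ℕ} (h : l.getLast? = some x)
    (hlen : l.length = m) : l.getD (m-1) d = x := by
  have hnil : l ≠ [] := by intro hl; subst hl; simp at h
  rw [List.getLast?_eq_getLast hnil] at h
  subst hlen
  have hm1 : l.length - 1 < l.length := by
    have := List.length_pos_iff.2 hnil; omega
  rw [List.getD_eq_getElem l d hm1, ← Option.some_inj.1 h, List.getLast_eq_getElem hnil]

lemma hm_step [CompactSpace M] (δ : ℕ → ℝ) (hδpos : ∀ k, 0 < δ k)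
    (hchain : ∀ k (x y : M), dist x y < δ k → ∀ η, 0 < η →
      ∃ l, HMSeg η ((1/2 : ℝ)^k) x y l)
    {k N : ℕ} {p : ℕ → M} (h : HMGood δ k N p) :
    ∃ N' p' m, 1 ≤ m ∧ N' = N * m ∧ HMGood δ (k+1) N' p' ∧
      ∀ j < N', dist (p' j) (p (j / m)) ≤ 2 * (1/2 : ℝ)^k := by
  obtain ⟨hN, hmesh, hnet⟩ := h
  have hεpos : ∀ n : ℕ, (0:ℝ) < (1/2)^n := fun n => by positivity
  -- net for next-next scale
  obtain ⟨Z, hZ⟩ := hm_net (M := M) (hδpos (k+2))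
  -- assignment of net points to chain points
  choose ι hι1 hι2 using hnet
  -- detours
  have hdet : ∀ z : M, ∃ l, HMSeg (δ (k+1)) ((1/2:ℝ)^k) (p (ι z)) (p (ι z)) l ∧ z ∈ l := by
    intro z
    have h1 : dist (p (ι z)) z < δ (k+1) := by rw [dist_comm]; exact hι2 z
    obtain ⟨l₁, hl₁⟩ := hchain (k+1) (p (ι z)) z h1 (δ (k+1)) (hδpos (k+1))
    obtain ⟨l₂, hl₂⟩ := hchain (k+1) z (p (ι z)) (hι2 z) (δ (k+1)) (hδpos (k+1))
    refine ⟨l₁ ++ l₂, ?_, List.mem_append_left _ hl₁.mem_last⟩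
    have := hl₁.append (hδpos (k+1)) hl₂
    exact this.mono (le_of_eq (by rw [pow_succ]; ring))
  choose dtr hdtr hdtrmem using hdet
  -- links
  set q : ℕ → M := fun i => if i + 1 < N then p (i+1) else p i with hq
  have hlink : ∀ i : ℕ, ∃ l, HMSeg (δ (k+1)) ((1/2:ℝ)^k) (p i) (q i) l := by
    intro i
    by_cases hi : i + 1 < N
    · obtain ⟨l, hl⟩ := hchain k (p i) (p (i+1)) (hmesh i hi) (δ (k+1)) (hδpos (k+1))
      rw [hq]; simp only [hi, if_pos]
      exact ⟨l, hl⟩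
    · rw [hq]; simp only [hi, if_neg, if_false]
      exact ⟨[p i], HMSeg.single _ (hεpos k).le⟩
  choose lnk hlnk using hlink
  -- the refined segment for index i
  set L : ℕ → List M := fun i =>
    ((Z.toList.filter (fun z => ι z = i)).foldr (fun z acc => dtr z ++ acc) (lnk i)) with hL
  have hLseg : ∀ i, HMSeg (δ (k+1)) ((1/2:ℝ)^k) (p i) (q i) (L i) := by
    intro i
    refine hm_foldr_seg (hδpos (k+1)) _ _ ?_ (hlnk i)
    intro z hz
    have : ι z = i := by simpa using (List.mem_filter.1 hz).2
    rw [← this]; exact hdtr z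
  have hLmem : ∀ z ∈ Z, z ∈ L (ι z) := by
    intro z hz
    rw [hL]
    exact hm_mem_foldr_append (by simp [List.mem_filter, hz]) (hdtrmem z)
  -- padding to uniform length
  set m : ℕ := max 1 ((Finset.range N).sup fun i => (L i).length) with hm
  have hm1 : 1 ≤ m := le_max_left _ _
  have hm0 : 0 < m := hm1
  have hlenle : ∀ i < N, (L i).length ≤ m := by
    intro i hi
    rw [hm]
    exact le_trans (Finset.le_sup (f := fun i => (L i).length) (Finset.mem_range.2 hi)) (le_max_right _ _)
  set P : ℕ → List M := fun i => List.replicate (m - (L i).length) (p i) ++ L i with hP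
  have hPseg : ∀ i, HMSeg (δ (k+1)) ((1/2:ℝ)^k) (p i) (q i) (P i) :=
    fun i => (hLseg i).pad (hδpos (k+1)) _
  have hPlen : ∀ i < N, (P i).length = m := by
    intro i hi
    rw [hP]; simp only [List.length_append, List.length_replicate]
    have := hlenle i hi; omega
  set p' : ℕ → M := fun j => (P (j / m)).getD (j % m) (p 0) with hp'
  refine ⟨N * m, p', m, hm1, rfl, ⟨?_, ?_, ?_⟩, ?_⟩
  · exact le_trans hN (Nat.le_mul_of_pos_right N hm0)
  · -- mesh
    intro j hj
    have hiN : j / m < N := Nat.div_lt_iff_lt_mul hm0 |>.2 (by omega)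
    have hrm : j % m < m := Nat.mod_lt _ hm0
    have hdm : m * (j / m) + j % m = j := Nat.div_add_mod j m
    by_cases hc : j % m + 1 < m
    · -- same segment
      have hd1 : (j+1) / m = j / m := by
        have : j + 1 = (j % m + 1) + m * (j / m) := by omega
        rw [this, Nat.add_mul_div_left _ _ hm0, Nat.div_eq_of_lt hc, Nat.zero_add]
      have hd2 : (j+1) % m = j % m + 1 := by
        have : j + 1 = (j % m + 1) + m * (j / m) := by omega
        rw [this, Nat.add_mul_mod_self_left, Nat.mod_eq_of_lt hc]
      have hlen : (P (j / m)).length = m := hPlen _ hiN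
      have hchain' := (hPseg (j / m)).2.2.1
      unfold List.Chain' at hchain'; rw [List.isChain_iff_getElem] at hchain'
      have hget := hchain' (j % m) (by omega)
      simp only [hp', hd1, hd2]
      rw [List.getD_eq_getElem _ _ (by omega : j % m < (P (j/m)).length),
          List.getD_eq_getElem _ _ (by omega : j % m + 1 < (P (j/m)).length)]
      exact hget
    · -- boundary between segments
      have hrm1 : j % m = m - 1 := by omega
      have hj1 : j + 1 = m * (j / m + 1) := by
        rw [Nat.mul_succ]; omega
      have hd1 : (j+1) / m = j / m + 1 := by
        rw [hj1, Nat.mul_div_cancel_left _ hm0]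
      have hd2 : (j+1) % m = 0 := by
        rw [hj1, Nat.mul_mod_right]
      have hi1N : j / m + 1 < N := by
        by_contra hcon
        push_neg at hcon
        have : N * m ≤ m * (j / m + 1) := by
          calc N * m = m * N := Nat.mul_comm N m
          _ ≤ m * (j / m + 1) := Nat.mul_le_mul_left m hcon
        omega
      have e1 : p' j = q (j / m) := by
        simp only [hp', hrm1]
        exact hm_getD_last (hPseg (j/m)).2.1 (hPlen _ hiN)
      have e2 : p' (j+1) = p (j / m + 1) := by
        simp only [hp', hd1, hd2]
        exact hm_getD_zero (hPseg (j/m + 1)).1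
      rw [e1, e2]
      simp only [hq, hi1N, if_pos]
      simp [hδpos (k+1)]
  · -- net
    intro y
    obtain ⟨z, hzZ, hyz⟩ := hZ y
    have hiN : ι z < N := hι1 z
    have hzP : z ∈ P (ι z) := List.mem_append_right _ (hLmem z hzZ)
    obtain ⟨⟨q', hq'⟩, hget⟩ := List.mem_iff_get.1 hzP
    have hq'm : q' < m := by rw [hPlen _ hiN] at hq'; exact hq'
    refine ⟨(ι z) * m + q', ?_, ?_⟩
    · calc (ι z) * m + q' < (ι z) * m + m := by omega
        _ = (ι z + 1) * m := by ring
        _ ≤ N * m := Nat.mul_le_mul_right m hiN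
    · have hd1 : ((ι z) * m + q') / m = ι z := by
        rw [Nat.add_comm, Nat.mul_comm, Nat.add_mul_div_left _ _ hm0,
          Nat.div_eq_of_lt hq'm, Nat.zero_add]
      have hd2 : ((ι z) * m + q') % m = q' := by
        rw [Nat.add_comm, Nat.mul_comm, Nat.add_mul_mod_self_left, Nat.mod_eq_of_lt hq'm]
      simp only [hp', hd1, hd2]
      rw [List.getD_eq_get _ _ ⟨q', (by omega : q' < (P (ι z)).length)⟩, hget]
      exact hyz
  · -- closeness to previous stage
    intro j hj
    have hiN : j / m < N := Nat.div_lt_iff_lt_mul hm0 |>.2 (by omega)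
    have hrm : j % m < (P (j/m)).length := by rw [hPlen _ hiN]; exact Nat.mod_lt _ hm0
    have hmem : p' j ∈ P (j / m) := by
      simp only [hp']
      rw [List.getD_eq_get _ _ ⟨_, hrm⟩]; exact List.get_mem _ _
    have := (hPseg (j / m)).2.2.2 _ hmem
    calc dist (p' j) (p (j / m)) ≤ (1/2:ℝ)^k := this
      _ ≤ 2 * (1/2:ℝ)^k := by nlinarith [hεpos k]

theorem hm_forward [Nonempty M] [CompactSpace M] [ConnectedSpace M]
    [LocallyConnectedSpace M] :
    ∃ f : Set.Icc (0 : ℝ) 1 → M, Continuous f ∧ Function.Surjective f := by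
  have hεpos : ∀ n : ℕ, (0:ℝ) < (1/2)^n := fun n => by positivity
  have hδex : ∀ k : ℕ, ∃ d : ℝ, 0 < d ∧ d ≤ (1/2)^k ∧ ∀ x y : M, dist x y < d →
      ∀ η, 0 < η → ∃ l, HMSeg η ((1/2:ℝ)^k) x y l :=
    fun k => hm_unif (hεpos k)
  choose δ hδpos hδle hchain using hδex
  -- the sequence of stages
  obtain ⟨st, hP, hR⟩ := hm_exists_seq (α := ℕ × (ℕ → M))
    (P := fun k a => HMGood (M := M) δ k a.1 a.2)
    (R := fun k a b => ∃ m, 1 ≤ m ∧ b.1 = a.1 * m ∧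
      ∀ j < b.1, dist (b.2 j) (a.2 (j / m)) ≤ 2 * (1/2:ℝ)^k)
    (by obtain ⟨N0, p0, h⟩ := hm_base (M := M) δ hδpos; exact ⟨(N0, p0), h⟩)
    (by
      intro k a ha
      obtain ⟨N', p', m, hm1, hNm, hgood, hclose⟩ := hm_step δ hδpos hchain ha
      exact ⟨(N', p'), hgood, m, hm1, hNm, hclose⟩)
  set N : ℕ → ℕ := fun k => (st k).1 with hN
  set p : ℕ → ℕ → M := fun k => (st k).2 with hp
  have hP' : ∀ k, HMGood δ k (N k) (p k) := hP
  have hR' : ∀ k, ∃ m, 1 ≤ m ∧ N (k+1) = N k * m ∧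
      ∀ j < N (k+1), dist (p (k+1) j) (p k (j / m)) ≤ 2 * (1/2:ℝ)^k := hR
  have hN1 : ∀ k, 1 ≤ N k := fun k => (hP' k).1
  have hNR : ∀ k (t : ℝ), (0:ℝ) < N k := fun k t => by exact_mod_cast hN1 k
  set g : ℕ → ℝ → M := fun k t => p k (min ⌊t * N k⌋₊ (N k - 1)) with hg
  -- Cauchy estimate
  have key1 : ∀ t ∈ Icc (0:ℝ) 1, ∀ k, dist (g k t) (g (k+1) t) ≤ 2 * (1/2:ℝ)^k := by
    intro t ht k
    obtain ⟨m, hm1, hNm, hclose⟩ := hR' k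
    have hm0 : 0 < m := hm1
    have hmR : (0:ℝ) < m := by exact_mod_cast hm0
    set j' := min ⌊t * N (k+1)⌋₊ (N (k+1) - 1) with hj'
    have hj'lt : j' < N (k+1) := by
      have := hN1 (k+1); omega
    have hfd : ⌊t * N k⌋₊ = ⌊t * N (k+1)⌋₊ / m := by
      have harith : t * N k = t * N (k+1) / m := by
        rw [hNm]; push_cast; field_simp
      rw [harith, ← Nat.floor_div_natCast]
    have hsub : (N k * m - 1) / m = N k - 1 := by
      obtain ⟨n, hn⟩ : ∃ n, N k = n + 1 := ⟨N k - 1, by have := hN1 k; omega⟩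
      have h1 : N k * m - 1 = (m - 1) + m * n := by
        rw [hn]; have : (n+1) * m = n * m + m := by ring
        rw [this]; have : m * n = n * m := Nat.mul_comm m n
        omega
      rw [h1, Nat.add_mul_div_left _ _ hm0, Nat.div_eq_of_lt (by omega), hn]
      omega
    have hdiv : j' / m = min ⌊t * N k⌋₊ (N k - 1) := by
      by_cases hcase : ⌊t * N (k+1)⌋₊ ≤ N (k+1) - 1
      · have hj'e : j' = ⌊t * N (k+1)⌋₊ := by rw [hj']; omega
        have hle : ⌊t * N k⌋₊ ≤ N k - 1 := by
          rw [hfd, ← hsub, ← hNm]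
          exact Nat.div_le_div_right hcase
        rw [hj'e, ← hfd]; omega
      · have hj'e : j' = N (k+1) - 1 := by rw [hj']; omega
        have hge : N k - 1 ≤ ⌊t * N k⌋₊ := by
          rw [hfd]
          calc N k - 1 ≤ N k := by omega
            _ = N k * m / m := (Nat.mul_div_cancel _ hm0).symm
            _ = N (k+1) / m := by rw [hNm]
            _ ≤ ⌊t * N (k+1)⌋₊ / m := Nat.div_le_div_right (by omega)
        rw [hj'e, hNm, hsub]; omega
    have := hclose j' hj'lt
    rw [hdiv] at this
    simp only [hg]
    rw [← hj', dist_comm]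
    exact this
  have hcauchy : ∀ t : Icc (0:ℝ) 1, CauchySeq (fun k => g k ↑t) := by
    intro t
    apply cauchySeq_of_le_geometric (1/2) 2 (by norm_num)
    intro n
    exact key1 ↑t t.2 n
  have hlim : ∀ t : Icc (0:ℝ) 1, ∃ x : M, Tendsto (fun k => g k ↑t) atTop (𝓝 x) :=
    fun t => cauchySeq_tendsto_of_complete (hcauchy t)
  choose f hf using hlim
  have htail : ∀ (t : Icc (0:ℝ) 1) (k : ℕ), dist (g k ↑t) (f t) ≤ 4 * (1/2:ℝ)^k := by
    intro t k
    have := dist_le_of_le_geometric_of_tendsto (1/2) 2 (by norm_num)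
      (fun n => key1 ↑t t.2 n) (hf t) k
    calc dist (g k ↑t) (f t) ≤ 2 * (1/2:ℝ)^k / (1 - 1/2) := this
      _ = 4 * (1/2:ℝ)^k := by ring
  -- modulus of continuity at stage k
  have hmod : ∀ k, ∀ s t : ℝ, s ∈ Icc (0:ℝ) 1 → t ∈ Icc (0:ℝ) 1 →
      |s - t| < 1 / N k → dist (g k s) (g k t) ≤ (1/2:ℝ)^k := by
    intro k s t hs ht hst
    have hfl : ∀ u v : ℝ, u ∈ Icc (0:ℝ) 1 → v ∈ Icc (0:ℝ) 1 → |u - v| < 1 / N k →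
        ⌊u * N k⌋₊ ≤ ⌊v * N k⌋₊ + 1 := by
      intro u v hu hv huv
      have h1 : u * N k ≤ v * N k + 1 := by
        have hpos := hNR k 0
        have h3 : (u - v) * N k < (1 / N k) * N k :=
          mul_lt_mul_of_pos_right (abs_lt.1 huv).2 hpos
        have h4 : (1 / (N k : ℝ)) * N k = 1 := by field_simp
        nlinarith
      calc ⌊u * N k⌋₊ ≤ ⌊v * N k + 1⌋₊ := Nat.floor_le_floor h1
        _ = ⌊v * N k⌋₊ + 1 := by
          rw [Nat.floor_add_one (mul_nonneg hv.1 (hNR k 0).le)]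
    have h1 := hfl s t hs ht hst
    have h2 := hfl t s ht hs (by rwa [abs_sub_comm])
    set js := min ⌊s * N k⌋₊ (N k - 1) with hjs
    set jt := min ⌊t * N k⌋₊ (N k - 1) with hjt
    have hcases : js = jt ∨ js + 1 = jt ∨ jt + 1 = js := by omega
    rcases hcases with h | h | h
    · simp only [hg]; rw [← hjs, ← hjt, h, dist_self]; positivity
    · have hlt : js + 1 < N k := by have := hN1 k; omega
      have := (hP' k).2.1 js hlt
      calc dist (g k s) (g k t) = dist (p k js) (p k (js+1)) := by simp only [hg]; rw [← hjs, ← hjt, ← h]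
        _ ≤ (1/2:ℝ)^k := le_trans this.le (hδle k)
    · have hlt : jt + 1 < N k := by have := hN1 k; omega
      have := (hP' k).2.1 jt hlt
      calc dist (g k s) (g k t) = dist (p k (jt+1)) (p k jt) := by simp only [hg]; rw [← hjs, ← hjt, ← h]
        _ = dist (p k jt) (p k (jt+1)) := dist_comm _ _
        _ ≤ (1/2:ℝ)^k := le_trans this.le (hδle k)
  -- continuity
  have hcont : Continuous f := by
    rw [Metric.continuous_iff]
    intro b ε hε
    obtain ⟨k, hk⟩ := exists_pow_lt_of_lt_one (show (0:ℝ) < ε/9 by linarith)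
      (show (1/2:ℝ) < 1 by norm_num)
    refine ⟨1 / N k, by have := hNR k 0; positivity, ?_⟩
    intro a hab
    have hab' : |(a:ℝ) - (b:ℝ)| < 1 / N k := by
      rw [Subtype.dist_eq, Real.dist_eq] at hab; exact hab
    calc dist (f a) (f b) ≤ dist (f a) (g k ↑a) + dist (g k ↑a) (g k ↑b) +
          dist (g k ↑b) (f b) := dist_triangle4 _ _ _ _
      _ ≤ 4 * (1/2:ℝ)^k + (1/2:ℝ)^k + 4 * (1/2:ℝ)^k := by
        gcongr
        · rw [dist_comm]; exact htail a k
        · exact hmod k ↑a ↑b a.2 b.2 hab'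
        · exact htail b k
      _ = 9 * (1/2:ℝ)^k := by ring
      _ < 9 * (ε/9) := by linarith
      _ = ε := by ring
  -- surjectivity
  have hsurj : Function.Surjective f := by
    intro y
    have hclosed : IsClosed (range f) := (isCompact_range hcont).isClosed
    have hmem : y ∈ closure (range f) := by
      rw [Metric.mem_closure_iff]
      intro ε hε
      obtain ⟨k, hk⟩ := exists_pow_lt_of_lt_one (show (0:ℝ) < ε/5 by linarith)
        (show (1/2:ℝ) < 1 by norm_num)
      obtain ⟨j, hjN, hjd⟩ := (hP' k).2.2 y
      set t : ℝ := (j : ℝ) / N k with ht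
      have htmem : t ∈ Icc (0:ℝ) 1 := by
        constructor
        · positivity
        · rw [ht, div_le_one (hNR k 0)]
          exact_mod_cast Nat.le_of_lt hjN
      have hgt : g k t = p k j := by
        simp only [hg]
        have : t * N k = (j:ℝ) := by
          rw [ht, div_mul_cancel₀ _ (hNR k 0).ne']
        rw [this, Nat.floor_natCast]
        congr 1
        have := hN1 k; omega
      refine ⟨f ⟨t, htmem⟩, mem_range_self _, ?_⟩
      calc dist y (f ⟨t, htmem⟩) ≤ dist y (p k j) + dist (p k j) (f ⟨t, htmem⟩) :=
          dist_triangle _ _ _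
        _ ≤ δ (k+1) + 4 * (1/2:ℝ)^k := by
          refine add_le_add hjd.le ?_
          rw [← hgt]; exact htail ⟨t, htmem⟩ k
        _ ≤ (1/2:ℝ)^(k+1) + 4 * (1/2:ℝ)^k := by gcongr; exact hδle (k+1)
        _ ≤ 5 * (1/2:ℝ)^k := by
          have : (1/2:ℝ)^(k+1) ≤ (1/2:ℝ)^k := by
            exact pow_le_pow_of_le_one (by norm_num) (by norm_num) (Nat.le_succ k)
          linarith
        _ < 5 * (ε/5) := by linarith
        _ = ε := by ring
    rcases hclosed.closure_subset hmem with ⟨t, ht⟩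
    exact ⟨t, ht⟩
  exact ⟨f, hcont, hsurj⟩

end HahnMazurkiewicz

lemma hm_Icc_locconn : LocallyConnectedSpace (Set.Icc (0:ℝ) 1) := by
  rw [locallyConnectedSpace_iff_subsets_isOpen_isConnected]
  intro x U hU
  obtain ⟨ε, hε, hball⟩ := Metric.mem_nhds_iff.1 hU
  refine ⟨Metric.ball x ε, hball, Metric.isOpen_ball, Metric.mem_ball_self hε,
    ⟨x, Metric.mem_ball_self hε⟩, ?_⟩
  have heq : (Metric.ball x ε : Set (Set.Icc (0:ℝ) 1)) =
      Subtype.val ⁻¹' (Metric.ball (x : ℝ) ε) := by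
    ext z; simp [Metric.mem_ball, Subtype.dist_eq]
  rw [heq]
  apply IsInducing.subtypeVal.isPreconnected_image.mp
  rw [Subtype.image_preimage_coe]
  exact ((convex_Icc (0:ℝ) 1).inter (convex_ball (x:ℝ) ε)).isPreconnected

lemma hm_quot_locconn {X Y : Type} [TopologicalSpace X] [TopologicalSpace Y]
    [LocallyConnectedSpace X] {f : X → Y} (hf : IsQuotientMap f) :
    LocallyConnectedSpace Y := by
  rw [locallyConnectedSpace_iff_connectedComponentIn_open]
  intro F hF y hy
  rw [← hf.isOpen_preimage]
  have heq : f ⁻¹' (connectedComponentIn F y) =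
      ⋃ x ∈ f ⁻¹' (connectedComponentIn F y), connectedComponentIn (f ⁻¹' F) x := by
    apply Set.Subset.antisymm
    · intro x hx
      exact mem_biUnion hx (mem_connectedComponentIn (connectedComponentIn_subset F y hx))
    · refine iUnion₂_subset fun x hx => ?_
      intro w hw
      have hxF : x ∈ f ⁻¹' F := connectedComponentIn_subset F y hx
      have himg : f '' (connectedComponentIn (f ⁻¹' F) x) ⊆ connectedComponentIn F (f x) := by
        apply IsPreconnected.subset_connectedComponentIn
        · exact isPreconnected_connectedComponentIn.image f hf.continuous.continuousOn
        · exact ⟨x, mem_connectedComponentIn hxF, rfl⟩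
        · exact (Set.image_mono (connectedComponentIn_subset _ _)).trans
            (Set.image_preimage_subset f F)
      have hCeq : connectedComponentIn F y = connectedComponentIn F (f x) :=
        connectedComponentIn_eq hx
      show f w ∈ connectedComponentIn F y
      rw [hCeq]
      exact himg ⟨w, hw, rfl⟩
  rw [heq]
  exact isOpen_biUnion fun x _ => (hF.preimage hf.continuous).connectedComponentIn

lemma hm_secondCountable {X Y : Type} [TopologicalSpace X] [TopologicalSpace Y]
    [SecondCountableTopology X] [CompactSpace X] [T2Space Y]
    (f : X → Y) (hc : Continuous f) (hs : Function.Surjective f) :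
    SecondCountableTopology Y := by
  obtain ⟨B, hBcount, -, hBbasis⟩ := TopologicalSpace.exists_countable_basis X
  have hclosed : IsClosedMap f := hc.isClosedMap
  set 𝒞 : Set (Set Y) :=
    (fun S : Set (Set X) => (f '' (⋃₀ S)ᶜ)ᶜ) '' {S | S.Finite ∧ S ⊆ B} with h𝒞
  have hcount : 𝒞.Countable :=
    (Set.countable_setOf_finite_subset hBcount).image _
  refine (TopologicalSpace.IsTopologicalBasis.secondCountableTopology ?_ hcount)
  apply TopologicalSpace.isTopologicalBasis_of_isOpen_of_nhds
  · rintro u ⟨S, ⟨hSfin, hSB⟩, rfl⟩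
    apply isOpen_compl_iff.2
    apply hclosed
    apply isClosed_compl_iff.2
    exact isOpen_sUnion fun t ht => hBbasis.isOpen (hSB ht)
  · intro y u hyu hu
    -- cover the fiber of y by basis elements inside f ⁻¹' u
    have hfiber : IsCompact (f ⁻¹' {y}) := (isClosed_singleton.preimage hc).isCompact
    have hsub : f ⁻¹' {y} ⊆ f ⁻¹' u := fun x hx => by
      simp only [mem_preimage, mem_singleton_iff] at hx
      simp [mem_preimage, hx, hyu]
    have hex : ∀ x ∈ f ⁻¹' {y}, ∃ b ∈ B, x ∈ b ∧ b ⊆ f ⁻¹' u := fun x hx =>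
      hBbasis.exists_subset_of_mem_open (hsub hx) (hu.preimage hc)
    choose! b hbB hxb hbu using hex
    obtain ⟨s, hss, hsfin, hscover⟩ := hfiber.elim_finite_subcover_image
      (fun x (hx : x ∈ f ⁻¹' {y}) => hBbasis.isOpen (hbB x hx))
      (fun x hx => mem_biUnion hx (hxb x hx))
    set S : Set (Set X) := b '' s with hS
    have hsUnion : ⋃₀ S = ⋃ x ∈ s, b x := by rw [hS, sUnion_image]
    refine ⟨(f '' (⋃₀ S)ᶜ)ᶜ, ⟨S, ⟨hsfin.image b, ?_⟩, rfl⟩, ?_, ?_⟩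
    · rintro t ⟨x, hx, rfl⟩
      exact hbB x (hss hx)
    · intro hyim
      obtain ⟨x', hx', hfx'⟩ := hyim
      apply hx'
      rw [hsUnion]
      exact hscover (show x' ∈ f ⁻¹' {y} by simp [mem_preimage, hfx'])
    · intro z hz
      obtain ⟨x', rfl⟩ := hs z
      by_cases hx' : x' ∈ ⋃₀ S
      · rw [hsUnion] at hx'
        obtain ⟨x, hxs, hx'b⟩ := mem_iUnion₂.1 hx'
        exact hbu x (hss hxs) hx'b
      · exact absurd (mem_image_of_mem f hx') hz

/-- Hahn–Mazurkiewicz–Sierpiński theorem: a nonempty compact connected locally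
connected metric space is a continuous image of `[0,1]`; conversely, any Hausdorff
continuous image of `[0,1]` is a compact, connected, locally connected metrizable space. -/
theorem hahn_mazurkiewicz_sierpinski :
    (∀ (M : Type) [MetricSpace M], Nonempty M → CompactSpace M → ConnectedSpace M →
      LocallyConnectedSpace M →
      ∃ f : Set.Icc (0 : ℝ) 1 → M, Continuous f ∧ Function.Surjective f) ∧
    (∀ (Y : Type) [TopologicalSpace Y] [T2Space Y] (f : Set.Icc (0 : ℝ) 1 → Y),
      Continuous f → Function.Surjective f →
      CompactSpace Y ∧ ConnectedSpace Y ∧ LocallyConnectedSpace Y ∧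
        TopologicalSpace.MetrizableSpace Y) := by
  constructor
  · intro M _ hne hcomp hconn hlc
    exact hm_forward
  · intro Y _ _ f hc hs
    haveI hcompY : CompactSpace Y :=
      ⟨by rw [← Set.range_eq_univ.2 hs]; exact isCompact_range hc⟩
    have hconnY : ConnectedSpace Y :=
      connectedSpace_iff_univ.2 (Set.range_eq_univ.2 hs ▸ isConnected_range hc)
    haveI := hm_Icc_locconn
    have hq : IsQuotientMap f := hc.isClosedMap.isQuotientMap hc hs
    have hlocY : LocallyConnectedSpace Y := hm_quot_locconn hq
    haveI := hm_secondCountable f hc hs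
    exact ⟨hcompY, hconnY, hlocY, inferInstance⟩
end

section
/- There exist compact, connected, locally connected sets X, Y ⊂ ℝ² such that X ∩ Y is compact and connected but not locally connected. -/
open Set Metric

namespace CombNLC
noncomputable def tw (k : ℕ) : ℝ := (2:ℝ)⁻¹ ^ k
lemma tw_pos (k : ℕ) : 0 < tw k := by unfold tw; positivity
lemma tw_lt_tw {a b : ℕ} : tw a < tw b ↔ b < a :=
  pow_lt_pow_iff_right_of_lt_one₀ (by norm_num) (by norm_num)
lemma tw_le_tw {a b : ℕ} : tw a ≤ tw b ↔ b ≤ a := by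
  rw [← not_lt, ← not_lt, not_iff_not]; exact tw_lt_tw
lemma tw_zero : tw 0 = 1 := by simp [tw]
lemma tw_le_one (k : ℕ) : tw k ≤ 1 := by rw [← tw_zero, tw_le_tw]; omega
lemma tw_succ (k : ℕ) : tw (k+1) = tw k / 2 := by simp [tw, pow_succ]; ring
lemma two_tw (k : ℕ) : 2 * tw (k+1) = tw k := by rw [tw_succ]; ring
lemma four_tw (k : ℕ) : 4 * tw (k+2) = tw k := by
  have h1 := two_tw (k+1); have h2 := two_tw k
  have e : tw (k+1+1) = tw (k+2) := by norm_num
  linarith [e ▸ h1]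
lemma exists_tw_lt {ε : ℝ} (hε : 0 < ε) : ∃ k, tw k < ε :=
  exists_pow_lt_of_lt_one hε (by norm_num)
def P : Set ℝ := insert 0 (Set.range tw)

lemma P_subset_Icc : P ⊆ Icc (0:ℝ) 1 := by
  rintro x (rfl | ⟨k, rfl⟩)
  · exact ⟨le_refl _, by norm_num⟩
  · exact ⟨(tw_pos k).le, tw_le_one k⟩

lemma isCompact_P : IsCompact P := by
  have : Filter.Tendsto tw Filter.atTop (nhds 0) :=
    tendsto_pow_atTop_nhds_zero_of_lt_one (by norm_num : (0:ℝ) ≤ 2⁻¹) (by norm_num)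
  exact this.isCompact_insert_range

def Heights (n k : ℕ) : Set ℝ := {y | ∃ j : ℕ, j ≤ n ^ k ∧ y = (j : ℝ) / n ^ k}

def bridges (n k : ℕ) : Set (ℝ × ℝ) := Icc (tw (k+1)) (tw k) ×ˢ Heights n k

def comb (n : ℕ) : Set (ℝ × ℝ) := (P ×ˢ Icc (0:ℝ) 1) ∪ ⋃ k, bridges n k

lemma heights_mem_Icc {n k : ℕ} (hn : 1 ≤ n) {y : ℝ} (hy : y ∈ Heights n k) :
    y ∈ Icc (0:ℝ) 1 := by
  obtain ⟨j, hj, rfl⟩ := hy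
  have h1 : (1:ℝ) ≤ (n:ℝ) := by exact_mod_cast hn
  have hnk : (0:ℝ) < (n:ℝ) ^ k := by positivity
  constructor
  · positivity
  · rw [div_le_one hnk]
    exact_mod_cast hj

lemma comb_subset {n : ℕ} (hn : 1 ≤ n) : comb n ⊆ Icc (0:ℝ) 1 ×ˢ Icc (0:ℝ) 1 := by
  rintro ⟨x, y⟩ (⟨hx, hy⟩ | hz)
  · exact ⟨P_subset_Icc hx, hy⟩
  · simp only [mem_iUnion] at hz
    obtain ⟨k, hx, hy⟩ := hz
    refine ⟨⟨(tw_pos (k+1)).le.trans hx.1, hx.2.trans (tw_le_one k)⟩, heights_mem_Icc hn hy⟩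

lemma P_eq_tw {x : ℝ} {k : ℕ} (hx : x ∈ P) (h1 : tw (k+1) < x) (h2 : x < tw k + tw (k+1)) :
    x = tw k := by
  rcases hx with rfl | ⟨j, rfl⟩
  · exact absurd h1 (not_lt.2 (tw_pos _).le)
  · congr 1
    have hjk : j ≤ k := by
      have := tw_lt_tw.1 (h1.trans_le (le_refl (tw j)) : tw (k+1) < tw j)
      omega
    by_contra hne
    have hj2 : j + 2 ≤ k + 1 := by omega
    have hle : tw (k+1) ≤ tw (j+2) := tw_le_tw.2 hj2
    have h4 : tw j = 4 * tw (j+2) := by rw [tw_succ, tw_succ]; ring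
    have h3 : tw k = 2 * tw (k+1) := by rw [tw_succ]; ring
    nlinarith [tw_pos (k+1), tw_pos (j+2)]

lemma not_P_Ioo {x : ℝ} {k : ℕ} (hx : x ∈ P) (h1 : tw (k+1) < x) (h2 : x < tw k) : False := by
  have := P_eq_tw hx h1 (by linarith [tw_pos (k+1)])
  linarith

lemma col_le {x : ℝ} {k k' : ℕ} (hx : x ∈ Icc (tw (k'+1)) (tw k')) (h : tw (k+1) < x) :
    k' ≤ k := by
  have : tw (k+1) < tw k' := lt_of_lt_of_le h hx.2
  have := tw_lt_tw.1 this; omega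

lemma col_ge {x : ℝ} {k k' : ℕ} (hx : x ∈ Icc (tw (k'+1)) (tw k')) (h : x < tw k) :
    k ≤ k' := by
  have : tw (k'+1) < tw k := lt_of_le_of_lt hx.1 h
  have := tw_lt_tw.1 this; omega

lemma col_unique {x : ℝ} {k k' : ℕ} (hx : x ∈ Icc (tw (k'+1)) (tw k'))
    (h1 : tw (k+1) < x) (h2 : x < tw k) : k' = k :=
  le_antisymm (col_le hx h1) (col_ge hx h2)

lemma exists_col {x : ℝ} (h0 : 0 < x) (h1 : x ≤ 1) : ∃ k, x ∈ Icc (tw (k+1)) (tw k) := by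
  classical
  have hP : ∃ m, tw m < x := exists_tw_lt h0
  have hm0lt : tw (Nat.find hP) < x := Nat.find_spec hP
  have hm0pos : Nat.find hP ≠ 0 := by
    intro h
    rw [h, tw_zero] at hm0lt; linarith
  obtain ⟨k, hk⟩ : ∃ k, Nat.find hP = k + 1 := ⟨Nat.find hP - 1, by omega⟩
  rw [hk] at hm0lt
  refine ⟨k, hm0lt.le, ?_⟩
  have := Nat.find_min hP (m := k) (by omega)
  linarith [not_lt.1 this]

lemma heights_unique {n k : ℕ} {y y' : ℝ} (hy : y ∈ Heights n k)
    (hy' : y' ∈ Heights n k) (h : |y - y'| < ((n:ℝ) ^ k)⁻¹) (hn : 1 ≤ n) : y = y' := by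
  obtain ⟨j, _, rfl⟩ := hy
  obtain ⟨j', _, rfl⟩ := hy'
  have h1 : (1:ℝ) ≤ (n:ℝ) := by exact_mod_cast hn
  have hnk : (0:ℝ) < (n:ℝ) ^ k := by positivity
  have habs : |(j:ℝ) - j'| < 1 := by
    rw [div_sub_div_same, abs_div, abs_of_pos hnk, div_lt_iff₀ hnk] at h
    calc |(j:ℝ) - j'| < ((n:ℝ)^k)⁻¹ * (n:ℝ)^k := h
    _ = 1 := by field_simp
  have hj : j = j' := by
    rcases abs_lt.1 habs with ⟨hl, hr⟩
    have c1 : (j:ℤ) - j' < 1 := by exact_mod_cast (by push_cast; linarith : (((j:ℤ) - (j':ℤ) : ℤ) : ℝ) < 1)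
    have c2 : (-1 : ℤ) < (j:ℤ) - j' := by exact_mod_cast (by push_cast; linarith : ((-1:ℤ):ℝ) < (((j:ℤ) - (j':ℤ) : ℤ) : ℝ))
    omega
  rw [hj]

lemma floor_height (n k : ℕ) (hn : 1 ≤ n) {y : ℝ} (hy : y ∈ Icc (0:ℝ) 1) :
    ∃ h ∈ Heights n k, |h - y| ≤ ((n:ℝ)^k)⁻¹ := by
  have h1 : (1:ℝ) ≤ (n:ℝ) := by exact_mod_cast hn
  have hnk : (0:ℝ) < (n:ℝ) ^ k := by positivity
  refine ⟨(⌊y * (n:ℝ)^k⌋₊ : ℝ) / (n:ℝ)^k, ⟨⌊y * (n:ℝ)^k⌋₊, ?_, rfl⟩, ?_⟩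
  · have hle : y * (n:ℝ)^k ≤ (n:ℝ)^k := by nlinarith [hy.2, hy.1]
    calc ⌊y * (n:ℝ)^k⌋₊ ≤ ⌊((n:ℝ)^k)⌋₊ := Nat.floor_le_floor hle
    _ = ⌊((n^k : ℕ) : ℝ)⌋₊ := by norm_cast
    _ = n^k := Nat.floor_natCast _
  · have hfl : (⌊y * (n:ℝ)^k⌋₊ : ℝ) ≤ y * (n:ℝ)^k := Nat.floor_le (by nlinarith [hy.1])
    have hfu : y * (n:ℝ)^k < ⌊y * (n:ℝ)^k⌋₊ + 1 := Nat.lt_floor_add_one _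
    have hinv : ((n:ℝ)^k)⁻¹ * (n:ℝ)^k = 1 := inv_mul_cancel₀ hnk.ne'
    have hc : (n:ℝ)^k * y = y * (n:ℝ)^k := mul_comm _ _
    rw [abs_le, div_sub' hnk.ne']
    constructor
    · rw [neg_le, ← neg_div, div_le_iff₀ hnk]
      linarith
    · rw [div_le_iff₀ hnk]
      linarith


lemma seg_coord {p q z : ℝ×ℝ} (h : z ∈ segment ℝ p q) :
    z.1 ∈ segment ℝ p.1 q.1 ∧ z.2 ∈ segment ℝ p.2 q.2 := by
  obtain ⟨a, b, ha, hb, hab, rfl⟩ := h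
  exact ⟨⟨a, b, ha, hb, hab, rfl⟩, ⟨a, b, ha, hb, hab, rfl⟩⟩

lemma mem_ball_iff {p q : ℝ×ℝ} {r : ℝ} :
    q ∈ ball p r ↔ |q.1 - p.1| < r ∧ |q.2 - p.2| < r := by
  rw [mem_ball, Prod.dist_eq, max_lt_iff, Real.dist_eq, Real.dist_eq]

lemma one_mem_P : (1:ℝ) ∈ P := by right; exact ⟨0, by simp [tw]⟩

lemma tw_mem_P (k : ℕ) : tw k ∈ P := by right; exact ⟨k, rfl⟩

lemma hseg_subset_bridge {n k : ℕ} {x1 x2 h : ℝ} (hx1 : x1 ∈ Icc (tw (k+1)) (tw k))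
    (hx2 : x2 ∈ Icc (tw (k+1)) (tw k)) (hh : h ∈ Heights n k) :
    segment ℝ (x1, h) (x2, h) ⊆ bridges n k := by
  intro z hz
  obtain ⟨h1, h2⟩ := seg_coord hz
  rw [segment_same, mem_singleton_iff] at h2
  exact ⟨(convex_Icc _ _).segment_subset hx1 hx2 h1, h2 ▸ hh⟩

lemma vseg_subset_tooth {x y1 y2 : ℝ} (hx : x ∈ P) (hy1 : y1 ∈ Icc (0:ℝ) 1)
    (hy2 : y2 ∈ Icc (0:ℝ) 1) :
    segment ℝ (x, y1) (x, y2) ⊆ P ×ˢ Icc (0:ℝ) 1 := by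
  intro z hz
  obtain ⟨h1, h2⟩ := seg_coord hz
  rw [segment_same, mem_singleton_iff] at h1
  exact ⟨h1 ▸ hx, (convex_Icc _ _).segment_subset hy1 hy2 h2⟩

lemma seg_preconn (p q : ℝ×ℝ) : IsPreconnected (segment ℝ p q) :=
  (convex_segment p q).isPreconnected

lemma heights_finite (n k : ℕ) : (Heights n k).Finite := by
  have : Heights n k ⊆ (fun j : ℕ => (j:ℝ) / n ^ k) '' (Iic (n ^ k)) := by
    rintro y ⟨j, hj, rfl⟩; exact ⟨j, hj, rfl⟩
  exact (Set.Finite.image _ (finite_Iic _)).subset this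

lemma isClosed_bridges (n k : ℕ) : IsClosed (bridges n k) :=
  isClosed_Icc.prod (heights_finite n k).isClosed

lemma isClosed_comb {n : ℕ} (hn : 1 ≤ n) : IsClosed (comb n) := by
  rw [← isOpen_compl_iff, isOpen_iff_mem_nhds]
  intro p hp
  rw [mem_compl_iff] at hp
  rcases lt_trichotomy p.1 0 with hx | hx | hx
  · refine Filter.mem_of_superset (IsOpen.mem_nhds (isOpen_lt continuous_fst continuous_const) hx) ?_
    intro z hz
    simp only [mem_setOf_eq] at hz
    exact fun hc => absurd ((comb_subset hn hc).1.1) (not_le.2 hz)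
  · have hy : p.2 ∉ Icc (0:ℝ) 1 := by
      intro hy
      exact hp (Or.inl ⟨by rw [hx]; exact mem_insert _ _, hy⟩)
    rw [mem_Icc, not_and_or, not_le, not_le] at hy
    rcases hy with hy | hy
    · refine Filter.mem_of_superset (IsOpen.mem_nhds (isOpen_lt (continuous_snd) continuous_const) hy) ?_
      intro z hz
      simp only [mem_setOf_eq] at hz
      exact fun hc => absurd ((comb_subset hn hc).2.1) (not_le.2 hz)
    · refine Filter.mem_of_superset (IsOpen.mem_nhds (isOpen_lt continuous_const continuous_snd) hy) ?_
      intro z hz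
      simp only [mem_setOf_eq] at hz
      exact fun hc => absurd ((comb_subset hn hc).2.2) (not_le.2 hz)
  · obtain ⟨k0, hk0⟩ := exists_tw_lt hx
    set F : Set (ℝ×ℝ) := (P ×ˢ Icc (0:ℝ) 1) ∪ ⋃ k ∈ Finset.range (k0+1), bridges n k with hF
    have hFclosed : IsClosed F := by
      refine IsClosed.union (isCompact_P.isClosed.prod isClosed_Icc) ?_
      exact isClosed_biUnion_finset (fun k _ => isClosed_bridges n k)
    have hpF : p ∉ F := fun h => hp (by
      rcases h with h | h
      · exact Or.inl h
      · simp only [Finset.mem_range, mem_iUnion] at h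
        obtain ⟨k, _, hk⟩ := h
        exact Or.inr (mem_iUnion.2 ⟨k, hk⟩))
    have hopen : IsOpen (Fᶜ ∩ {z : ℝ×ℝ | tw (k0+1) < z.1}) :=
      hFclosed.isOpen_compl.inter (isOpen_lt continuous_const continuous_fst)
    have hmem : p ∈ Fᶜ ∩ {z : ℝ×ℝ | tw (k0+1) < z.1} := by
      refine ⟨hpF, ?_⟩
      have : tw (k0+1) < tw k0 := tw_lt_tw.2 (by omega)
      exact lt_trans this hk0
    refine Filter.mem_of_superset (hopen.mem_nhds hmem) ?_
    rintro z ⟨hzF, hz1⟩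
    simp only [mem_setOf_eq] at hz1
    intro hc
    refine hzF ?_
    rcases hc with h | h
    · exact Or.inl h
    · obtain ⟨k, hk⟩ := mem_iUnion.1 h
      have hkle : k ≤ k0 := col_le hk.1 hz1
      refine Or.inr ?_
      simp only [mem_iUnion, Finset.mem_range]
      exact ⟨k, by omega, hk⟩

lemma isCompact_comb {n : ℕ} (hn : 1 ≤ n) : IsCompact (comb n) :=
  IsCompact.of_isClosed_subset (isCompact_Icc.prod isCompact_Icc) (isClosed_comb hn)
    (comb_subset hn)

lemma zero_mem_Icc01 : (0:ℝ) ∈ Icc (0:ℝ) 1 := ⟨le_refl _, by norm_num⟩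
lemma one_mem_Icc01 : (1:ℝ) ∈ Icc (0:ℝ) 1 := ⟨by norm_num, le_refl _⟩

lemma zero_mem_heights (n k : ℕ) : (0:ℝ) ∈ Heights n k := ⟨0, Nat.zero_le _, by simp⟩

lemma one_mem_heights {n : ℕ} (hn : 1 ≤ n) (k : ℕ) : (1:ℝ) ∈ Heights n k := by
  refine ⟨n ^ k, le_refl _, ?_⟩
  have : ((n:ℝ)) ≠ 0 := by positivity
  rw [eq_comm]
  push_cast
  field_simp

lemma base_subset_comb {n : ℕ} : Icc (0:ℝ) 1 ×ˢ ({0} : Set ℝ) ⊆ comb n := by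
  rintro ⟨x, y⟩ ⟨hx, hy⟩
  rw [mem_singleton_iff] at hy
  subst hy
  rcases eq_or_lt_of_le hx.1 with h0 | h0
  · exact Or.inl ⟨Or.inl h0.symm, zero_mem_Icc01⟩
  · obtain ⟨k, hk⟩ := exists_col h0 hx.2
    exact Or.inr (mem_iUnion.2 ⟨k, hk, zero_mem_heights n k⟩)

lemma isConnected_comb {n : ℕ} (hn : 1 ≤ n) : IsConnected (comb n) := by
  refine ⟨⟨(0,0), Or.inl ⟨Or.inl rfl, zero_mem_Icc01⟩⟩, ?_⟩
  apply isPreconnected_of_forall ((0:ℝ), (0:ℝ))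
  intro z hz
  have hbase : IsPreconnected (Icc (0:ℝ) 1 ×ˢ ({0} : Set ℝ)) :=
    ((convex_Icc _ _).prod (convex_singleton _)).isPreconnected
  have h00 : ((0:ℝ),(0:ℝ)) ∈ Icc (0:ℝ) 1 ×ˢ ({0} : Set ℝ) := ⟨zero_mem_Icc01, rfl⟩
  rcases hz with ⟨hx, hy⟩ | hz
  · refine ⟨Icc (0:ℝ) 1 ×ˢ ({0} : Set ℝ) ∪ segment ℝ (z.1, 0) (z.1, z.2), ?_, ?_, ?_, ?_⟩
    · exact union_subset base_subset_comb
        (fun w hw => Or.inl (vseg_subset_tooth hx zero_mem_Icc01 hy hw))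
    · exact Or.inl h00
    · right
      have := right_mem_segment ℝ ((z.1, (0:ℝ))) ((z.1, z.2))
      simpa using this
    · refine IsPreconnected.union (z.1, 0) ⟨P_subset_Icc hx, rfl⟩
        (left_mem_segment _ _ _) hbase (seg_preconn _ _)
  · obtain ⟨k, hxk, hyk⟩ := mem_iUnion.1 hz
    have htwk : tw k ∈ Icc (tw (k+1)) (tw k) := ⟨(tw_le_tw.2 (by omega)), le_refl _⟩
    have hz2 : z.2 ∈ Icc (0:ℝ) 1 := heights_mem_Icc hn hyk
    refine ⟨(Icc (0:ℝ) 1 ×ˢ ({0} : Set ℝ) ∪ segment ℝ (tw k, 0) (tw k, z.2)) ∪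
      segment ℝ (tw k, z.2) (z.1, z.2), ?_, ?_, ?_, ?_⟩
    · refine union_subset (union_subset base_subset_comb ?_) ?_
      · exact fun w hw => Or.inl (vseg_subset_tooth (tw_mem_P k) zero_mem_Icc01 hz2 hw)
      · intro w hw
        exact Or.inr (mem_iUnion.2 ⟨k, hseg_subset_bridge htwk hxk hyk hw⟩)
    · exact Or.inl (Or.inl h00)
    · right
      have := right_mem_segment ℝ ((tw k, z.2)) ((z.1, z.2))
      simpa using this
    · refine IsPreconnected.union (tw k, z.2) (Or.inr (right_mem_segment _ _ _))
        (left_mem_segment _ _ _) ?_ (seg_preconn _ _)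
      exact IsPreconnected.union (tw k, 0) ⟨⟨(tw_pos k).le, tw_le_one k⟩, rfl⟩
        (left_mem_segment _ _ _) hbase (seg_preconn _ _)


def T : Set (ℝ × ℝ) := (P ×ˢ Icc (0:ℝ) 1) ∪ (Icc (0:ℝ) 1 ×ˢ ({0, 1} : Set ℝ))

lemma isCompact_T : IsCompact T := by
  refine IsCompact.union (isCompact_P.prod isCompact_Icc) (isCompact_Icc.prod ?_)
  have : ({0, 1} : Set ℝ).Finite := by simp
  exact this.isCompact

lemma T_subset_comb {n : ℕ} (hn : 1 ≤ n) : T ⊆ comb n := by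
  rintro ⟨x, y⟩ (h | ⟨hx, hy⟩)
  · exact Or.inl h
  · rcases hy with hy | hy
    · subst hy
      exact base_subset_comb ⟨hx, rfl⟩
    · rw [mem_singleton_iff] at hy; subst hy
      rcases eq_or_lt_of_le hx.1 with h0 | h0
      · exact Or.inl ⟨by rw [← h0]; exact mem_insert _ _, one_mem_Icc01⟩
      · obtain ⟨k, hk⟩ := exists_col h0 hx.2
        exact Or.inr (mem_iUnion.2 ⟨k, hk, one_mem_heights hn k⟩)

lemma comb_inter : comb 2 ∩ comb 3 = T := by
  apply Subset.antisymm
  · rintro ⟨x, y⟩ ⟨h2, h3⟩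
    have hxIcc : x ∈ Icc (0:ℝ) 1 := (comb_subset (by norm_num) h2).1
    have hyIcc : y ∈ Icc (0:ℝ) 1 := (comb_subset (by norm_num) h2).2
    by_cases hxP : x ∈ P
    · exact Or.inl ⟨hxP, hyIcc⟩
    · have h2' : (x, y) ∈ ⋃ k, bridges 2 k := h2.resolve_left (fun h => hxP h.1)
      have h3' : (x, y) ∈ ⋃ k, bridges 3 k := h3.resolve_left (fun h => hxP h.1)
      obtain ⟨k, hk2⟩ := mem_iUnion.1 h2'
      obtain ⟨k', hk3⟩ := mem_iUnion.1 h3'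
      -- x is in the open column interval
      have hxlt : x < tw k := lt_of_le_of_ne hk2.1.2 (fun h => hxP (h ▸ tw_mem_P k))
      have hxgt : tw (k+1) < x := lt_of_le_of_ne hk2.1.1 (fun h => hxP (h ▸ tw_mem_P (k+1)))
      have hkk : k' = k := col_unique hk3.1 hxgt hxlt
      subst hkk
      obtain ⟨j, hj, hy2⟩ := hk2.2
      obtain ⟨i, hi, hy3⟩ := hk3.2
      -- j / 2^k = i / 3^k  implies j = 0 or j = 2^k
      have hcast : (j : ℝ) * 3 ^ k' = (i : ℝ) * 2 ^ k' := by
        have h2pos : ((2:ℝ)) ^ k' ≠ 0 := by positivity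
        have h3pos : ((3:ℝ)) ^ k' ≠ 0 := by positivity
        have : (j : ℝ) / (2:ℝ)^k' = (i : ℝ) / (3:ℝ)^k' := by
          rw [hy2] at hy3
          push_cast at hy3 ⊢
          rw [hy3]
        field_simp at this
        linarith
      have hnat : j * 3 ^ k' = i * 2 ^ k' := by exact_mod_cast hcast
      have hdvd : 2 ^ k' ∣ j := by
        have h1 : 2 ^ k' ∣ j * 3 ^ k' := ⟨i, by rw [hnat]; ring⟩
        have hcop : Nat.Coprime (2 ^ k') (3 ^ k') :=
          Nat.Coprime.pow k' k' (by decide : Nat.Coprime 2 3)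
        exact hcop.dvd_of_dvd_mul_right h1
      have : j = 0 ∨ j = 2 ^ k' := by
        obtain ⟨t, rfl⟩ := hdvd
        have h2pos : 0 < 2 ^ k' := Nat.pow_pos (by norm_num)
        rcases Nat.lt_or_ge t 1 with ht | ht
        · left
          have : t = 0 := by omega
          rw [this, mul_zero]
        · right
          have h1 : 2 ^ k' * t ≤ 2 ^ k' * 1 := by simpa using hj
          have ht1 : t ≤ 1 := Nat.le_of_mul_le_mul_left h1 h2pos
          have : t = 1 := by omega
          rw [this, mul_one]
      rcases this with rfl | rfl
      · refine Or.inr ⟨hxIcc, Or.inl ?_⟩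
        rw [hy2]; simp
      · refine Or.inr ⟨hxIcc, Or.inr ?_⟩
        rw [hy2, mem_singleton_iff]
        push_cast
        field_simp
  · intro z hz
    exact ⟨T_subset_comb (by norm_num) hz, T_subset_comb (by norm_num) hz⟩

lemma isConnected_T : IsConnected T := by
  refine ⟨⟨(0,0), Or.inl ⟨mem_insert _ _, zero_mem_Icc01⟩⟩, ?_⟩
  apply isPreconnected_of_forall ((0:ℝ), (0:ℝ))
  intro z hz
  have hbase : IsPreconnected (Icc (0:ℝ) 1 ×ˢ ({0} : Set ℝ)) :=
    ((convex_Icc _ _).prod (convex_singleton _)).isPreconnected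
  have h00 : ((0:ℝ),(0:ℝ)) ∈ Icc (0:ℝ) 1 ×ˢ ({0} : Set ℝ) := ⟨zero_mem_Icc01, rfl⟩
  have hbsub : Icc (0:ℝ) 1 ×ˢ ({0} : Set ℝ) ⊆ T := by
    rintro ⟨x, y⟩ ⟨hx, hy⟩
    exact Or.inr ⟨hx, Or.inl hy⟩
  rcases hz with ⟨hx, hy⟩ | ⟨hx, hy⟩
  · refine ⟨Icc (0:ℝ) 1 ×ˢ ({0} : Set ℝ) ∪ segment ℝ (z.1, 0) (z.1, z.2), ?_, ?_, ?_, ?_⟩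
    · refine union_subset hbsub (fun w hw => Or.inl (vseg_subset_tooth hx zero_mem_Icc01 hy hw))
    · exact Or.inl h00
    · right
      have := right_mem_segment ℝ ((z.1, (0:ℝ))) ((z.1, z.2))
      simpa using this
    · exact IsPreconnected.union (z.1, 0) ⟨P_subset_Icc hx, rfl⟩
        (left_mem_segment _ _ _) hbase (seg_preconn _ _)
  · rcases hy with hy | hy
    · refine ⟨Icc (0:ℝ) 1 ×ˢ ({0} : Set ℝ), hbsub, h00, ⟨hx, hy⟩, hbase⟩
    · rw [mem_singleton_iff] at hy
      have htop : IsPreconnected (Icc (0:ℝ) 1 ×ˢ ({1} : Set ℝ)) :=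
        ((convex_Icc _ _).prod (convex_singleton _)).isPreconnected
      refine ⟨(Icc (0:ℝ) 1 ×ˢ ({0} : Set ℝ) ∪ segment ℝ (1, 0) (1, 1)) ∪
        Icc (0:ℝ) 1 ×ˢ ({1} : Set ℝ), ?_, ?_, ?_, ?_⟩
      · refine union_subset (union_subset hbsub ?_) ?_
        · exact fun w hw => Or.inl (vseg_subset_tooth one_mem_P zero_mem_Icc01 one_mem_Icc01 hw)
        · rintro ⟨a, b⟩ ⟨ha, hb⟩
          exact Or.inr ⟨ha, Or.inr hb⟩
      · exact Or.inl (Or.inl h00)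
      · exact Or.inr ⟨hx, by rw [hy]; rfl⟩
      · refine IsPreconnected.union ((1:ℝ), (1:ℝ)) (Or.inr (right_mem_segment _ _ _))
          ⟨one_mem_Icc01, rfl⟩ ?_ htop
        exact IsPreconnected.union ((1:ℝ), (0:ℝ)) ⟨one_mem_Icc01, rfl⟩
          (left_mem_segment _ _ _) hbase (seg_preconn _ _)


lemma inv_nk_le_tw {n : ℕ} (hn : 2 ≤ n) (k : ℕ) : ((n:ℝ)^k)⁻¹ ≤ tw k := by
  have h2n : (2:ℝ) ≤ (n:ℝ) := by exact_mod_cast hn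
  have h1 : (2:ℝ)^k ≤ (n:ℝ)^k := pow_le_pow_left₀ (by norm_num) h2n k
  have h2 : (0:ℝ) < 2^k := by positivity
  have : tw k = ((2:ℝ)^k)⁻¹ := by rw [tw, inv_pow]
  rw [this]
  exact inv_anti₀ h2 h1

/-- Case (b): ball around a tooth point. -/
lemma preconn_ball_tooth {n k : ℕ} (hn : 1 ≤ n) {y0 r : ℝ} (hy0 : y0 ∈ Icc (0:ℝ) 1)
    (hr : 0 < r) (hrk : r ≤ tw (k+1)) :
    IsPreconnected (comb n ∩ ball ((tw k, y0) : ℝ × ℝ) r) := by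
  have hcenter : ((tw k, y0) : ℝ×ℝ) ∈ ball ((tw k, y0) : ℝ×ℝ) r := mem_ball_self hr
  have htww : tw k = 2 * tw (k+1) := by rw [tw_succ]; ring
  apply isPreconnected_of_forall ((tw k, y0) : ℝ × ℝ)
  rintro ⟨x, y⟩ ⟨hq, hqball⟩
  obtain ⟨hbx, hby⟩ := mem_ball_iff.1 hqball
  simp only at hbx hby
  have hxl : tw (k+1) < x := by
    rcases abs_lt.1 hbx with ⟨h1, _⟩
    linarith
  have hxu : x < tw k + tw (k+1) := by
    rcases abs_lt.1 hbx with ⟨_, h2⟩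
    linarith
  rcases hq with ⟨hxP, hyI⟩ | hq
  · -- on the tooth itself
    have hx : x = tw k := P_eq_tw hxP hxl hxu
    subst hx
    refine ⟨segment ℝ (tw k, y0) (tw k, y), ?_, left_mem_segment _ _ _,
      right_mem_segment _ _ _, seg_preconn _ _⟩
    refine subset_inter (fun w hw => Or.inl (vseg_subset_tooth (tw_mem_P k) hy0 hyI hw)) ?_
    exact (convex_ball _ _).segment_subset hcenter hqball
  · obtain ⟨k'', hk''⟩ := mem_iUnion.1 hq
    obtain ⟨hxc, hyH⟩ := hk''
    simp only at hxc hyH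
    have hk2 : k'' ≤ k := col_le hxc hxl
    have hk1 : k ≤ k'' + 1 := by
      rcases Nat.eq_zero_or_pos k with rfl | hkpos
      · omega
      · obtain ⟨k1, rfl⟩ : ∃ k1, k = k1 + 1 := ⟨k - 1, by omega⟩
        have e0 : tw (k1 + 1 + 1) = tw (k1 + 2) := by norm_num
        have h4 : 4 * tw (k1 + 1 + 1) = tw k1 := by rw [e0]; exact four_tw k1
        have hlt : tw (k''+1) < tw k1 := by
          linarith [tw_pos (k1+1+1), hxc.1, two_tw (k1+1)]
        have := tw_lt_tw.1 hlt
        omega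
    have htk : tw k ∈ Icc (tw (k''+1)) (tw k'') := by
      constructor
      · exact tw_le_tw.2 (by omega)
      · exact tw_le_tw.2 (by omega)
    have heball : ((tw k, y) : ℝ×ℝ) ∈ ball ((tw k, y0) : ℝ×ℝ) r := by
      rw [mem_ball_iff]
      constructor
      · simp [hr]
      · simpa using hby
    have hyI : y ∈ Icc (0:ℝ) 1 := heights_mem_Icc hn hyH
    refine ⟨segment ℝ ((x:ℝ), y) (tw k, y) ∪ segment ℝ ((tw k : ℝ), y) (tw k, y0),
      ?_, ?_, ?_, ?_⟩
    · refine union_subset (subset_inter ?_ ?_) (subset_inter ?_ ?_)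
      · exact fun w hw => Or.inr (mem_iUnion.2 ⟨k'', hseg_subset_bridge hxc htk hyH hw⟩)
      · exact (convex_ball _ _).segment_subset hqball heball
      · exact fun w hw => Or.inl (vseg_subset_tooth (tw_mem_P k) hyI hy0 hw)
      · exact (convex_ball _ _).segment_subset heball hcenter
    · exact Or.inr (right_mem_segment _ _ _)
    · exact Or.inl (left_mem_segment _ _ _)
    · exact IsPreconnected.union (tw k, y) (right_mem_segment _ _ _) (left_mem_segment _ _ _)
        (seg_preconn _ _) (seg_preconn _ _)

/-- Case (c): ball around an interior bridge point. -/
lemma preconn_ball_bridge {n k : ℕ} (hn : 1 ≤ n) {x0 y0 r : ℝ}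
    (hx0 : x0 ∈ Icc (tw (k+1)) (tw k)) (hy0 : y0 ∈ Heights n k) (hr : 0 < r)
    (hr1 : r ≤ x0 - tw (k+1)) (hr2 : r ≤ tw k - x0) (hr3 : r ≤ ((n:ℝ)^k)⁻¹) :
    IsPreconnected (comb n ∩ ball ((x0, y0) : ℝ × ℝ) r) := by
  have hcenter : ((x0, y0) : ℝ×ℝ) ∈ ball ((x0, y0) : ℝ×ℝ) r := mem_ball_self hr
  apply isPreconnected_of_forall ((x0, y0) : ℝ × ℝ)
  rintro ⟨x, y⟩ ⟨hq, hqball⟩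
  obtain ⟨hbx, hby⟩ := mem_ball_iff.1 hqball
  simp only at hbx hby
  have hxl : tw (k+1) < x := by rcases abs_lt.1 hbx with ⟨h1, _⟩; linarith
  have hxu : x < tw k := by rcases abs_lt.1 hbx with ⟨_, h2⟩; linarith
  rcases hq with ⟨hxP, _⟩ | hq
  · exact (not_P_Ioo hxP hxl hxu).elim
  · obtain ⟨k'', hxc, hyH⟩ := mem_iUnion.1 hq
    simp only at hxc hyH
    obtain rfl : k'' = k := col_unique hxc hxl hxu
    have hyy : y = y0 := heights_unique hyH hy0 (lt_of_lt_of_le hby hr3) hn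
    subst hyy
    refine ⟨segment ℝ ((x:ℝ), y) (x0, y), ?_, right_mem_segment _ _ _,
      left_mem_segment _ _ _, seg_preconn _ _⟩
    refine subset_inter ?_ ((convex_ball _ _).segment_subset hqball hcenter)
    exact fun w hw => Or.inr (mem_iUnion.2 ⟨k'', hseg_subset_bridge hxc hx0 hyH hw⟩)


lemma chain_lemma {n : ℕ} (hn : 2 ≤ n) {y0 : ℝ} (hy0 : y0 ∈ Icc (0:ℝ) 1) (m : ℕ) :
    ∀ d : ℕ, ∀ y : ℝ, y ∈ Icc (0:ℝ) 1 →
      ((tw (m+1+d), y) : ℝ×ℝ) ∈ ball (((0:ℝ), y0) : ℝ×ℝ) (tw m) →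
    ∃ t, t ⊆ comb n ∩ ball (((0:ℝ), y0) : ℝ×ℝ) (tw m) ∧ IsPreconnected t ∧
      ((tw (m+1), y0) : ℝ×ℝ) ∈ t ∧ ((tw (m+1+d), y) : ℝ×ℝ) ∈ t := by
  have hn1 : 1 ≤ n := by omega
  have hq0 : ((tw (m+1), y0) : ℝ×ℝ) ∈ ball (((0:ℝ), y0) : ℝ×ℝ) (tw m) := by
    rw [mem_ball_iff]
    constructor
    · simp only
      rw [sub_zero, abs_of_pos (tw_pos _)]
      exact tw_lt_tw.2 (by omega)
    · simp [tw_pos m]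
  intro d
  induction d with
  | zero =>
    intro y hyI hyb
    exact ⟨segment ℝ (tw (m+1), y0) (tw (m+1), y),
      subset_inter (fun w hw => Or.inl (vseg_subset_tooth (tw_mem_P _) hy0 hyI hw))
        ((convex_ball _ _).segment_subset hq0 hyb),
      seg_preconn _ _, left_mem_segment _ _ _, right_mem_segment _ _ _⟩
  | succ d ih =>
    intro y hyI hyb
    rw [show m+1+(d+1) = (m+1+d)+1 from rfl] at hyb ⊢
    set k := m + 1 + d with hkdef
    obtain ⟨h, hH, hhy0⟩ := floor_height n k hn1 hy0
    have hhI : h ∈ Icc (0:ℝ) 1 := heights_mem_Icc hn1 hH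
    have hdist : |h - y0| < tw m := by
      have h1 : ((n:ℝ)^k)⁻¹ ≤ tw k := inv_nk_le_tw hn k
      have h2 : tw k < tw m := tw_lt_tw.2 (by omega)
      linarith [hhy0]
    have hkb : ((tw k, h) : ℝ×ℝ) ∈ ball (((0:ℝ), y0) : ℝ×ℝ) (tw m) := by
      rw [mem_ball_iff]
      refine ⟨?_, by simpa using hdist⟩
      simp only
      rw [sub_zero, abs_of_pos (tw_pos _)]
      exact tw_lt_tw.2 (by omega)
    have hk1b : ((tw (k+1), h) : ℝ×ℝ) ∈ ball (((0:ℝ), y0) : ℝ×ℝ) (tw m) := by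
      rw [mem_ball_iff]
      refine ⟨?_, by simpa using hdist⟩
      simp only
      rw [sub_zero, abs_of_pos (tw_pos _)]
      exact tw_lt_tw.2 (by omega)
    obtain ⟨t, htsub, htpre, ht0, htk⟩ := ih h hhI hkb
    have hIccK : tw (k+1) ∈ Icc (tw (k+1)) (tw k) := ⟨le_refl _, tw_le_tw.2 (by omega)⟩
    have hIccK2 : tw k ∈ Icc (tw (k+1)) (tw k) := ⟨tw_le_tw.2 (by omega), le_refl _⟩
    refine ⟨t ∪ segment ℝ (tw k, h) (tw (k+1), h) ∪ segment ℝ (tw (k+1), h) (tw (k+1), y),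
      ?_, ?_, ?_, ?_⟩
    · refine union_subset (union_subset htsub (subset_inter ?_ ?_)) (subset_inter ?_ ?_)
      · exact fun w hw => Or.inr (mem_iUnion.2 ⟨k, hseg_subset_bridge hIccK2 hIccK hH hw⟩)
      · exact (convex_ball _ _).segment_subset hkb hk1b
      · exact fun w hw => Or.inl (vseg_subset_tooth (tw_mem_P _) hhI hyI hw)
      · exact (convex_ball _ _).segment_subset hk1b hyb
    · refine IsPreconnected.union (tw (k+1), h) ?_ (left_mem_segment _ _ _) ?_ (seg_preconn _ _)
      · exact Or.inr (right_mem_segment _ _ _)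
      · exact IsPreconnected.union (tw k, h) htk (left_mem_segment _ _ _) htpre (seg_preconn _ _)
    · exact Or.inl (Or.inl ht0)
    · exact Or.inr (right_mem_segment _ _ _)


lemma preconn_ball_limit {n : ℕ} (hn : 2 ≤ n) {y0 : ℝ} (hy0 : y0 ∈ Icc (0:ℝ) 1) (m : ℕ) :
    IsPreconnected (comb n ∩ ball (((0:ℝ), y0) : ℝ×ℝ) (tw m)) := by
  have hn1 : 1 ≤ n := by omega
  have key : ∀ q ∈ comb n ∩ ball (((0:ℝ), y0) : ℝ×ℝ) (tw m), 0 < q.1 →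
      ∃ t, t ⊆ comb n ∩ ball (((0:ℝ), y0) : ℝ×ℝ) (tw m) ∧ IsPreconnected t ∧
      ((tw (m+1), y0) : ℝ×ℝ) ∈ t ∧ q ∈ t := by
    rintro ⟨x, y⟩ ⟨hq, hqball⟩ hx0
    obtain ⟨hbx, hby⟩ := mem_ball_iff.1 hqball
    simp only at hbx hby hx0
    rcases hq with ⟨hxP, hyI⟩ | hq
    · rcases hxP with h0 | ⟨k, rfl⟩
      · simp only at h0
        exact absurd h0 (ne_of_gt hx0)
      · have hkm : m + 1 ≤ k := by
          have hlt : tw k < tw m := by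
            rw [sub_zero] at hbx
            calc tw k = |tw k| := (abs_of_pos (tw_pos k)).symm
            _ < tw m := hbx
          have := tw_lt_tw.1 hlt; omega
        obtain ⟨d, rfl⟩ : ∃ d, k = m + 1 + d := ⟨k - (m+1), by omega⟩
        exact chain_lemma hn hy0 m d y hyI hqball
    · obtain ⟨k', hxc, hyH⟩ := mem_iUnion.1 hq
      simp only at hxc hyH
      have hyI : y ∈ Icc (0:ℝ) 1 := heights_mem_Icc hn1 hyH
      have hk'm : m ≤ k' := by
        have hlt : tw (k'+1) < tw m := by
          rw [sub_zero] at hbx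
          calc tw (k'+1) ≤ x := hxc.1
          _ = |x| := (abs_of_pos hx0).symm
          _ < tw m := hbx
        have := tw_lt_tw.1 hlt; omega
      have heb : ((tw (k'+1), y) : ℝ×ℝ) ∈ ball (((0:ℝ), y0) : ℝ×ℝ) (tw m) := by
        rw [mem_ball_iff]
        constructor
        · simp only
          rw [sub_zero, abs_of_pos (tw_pos _)]
          rw [sub_zero] at hbx
          calc tw (k'+1) ≤ x := hxc.1
          _ = |x| := (abs_of_pos hx0).symm
          _ < tw m := hbx
        · simpa using hby
      obtain ⟨d, hd⟩ : ∃ d, k' + 1 = m + 1 + d := ⟨k' - m, by omega⟩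
      obtain ⟨t, htsub, htpre, ht0, htk⟩ :=
        chain_lemma hn hy0 m d y hyI (by rw [← hd]; exact heb)
      rw [← hd] at htk
      refine ⟨t ∪ segment ℝ (tw (k'+1), y) (x, y), ?_, ?_, Or.inl ht0,
        Or.inr (right_mem_segment _ _ _)⟩
      · refine union_subset htsub (subset_inter ?_ ?_)
        · refine fun w hw => Or.inr (mem_iUnion.2 ⟨k',
            hseg_subset_bridge ⟨le_refl _, tw_le_tw.2 (by omega)⟩ hxc hyH hw⟩)
        · exact (convex_ball _ _).segment_subset heb hqball
      · exact IsPreconnected.union (tw (k'+1), y) htk (left_mem_segment _ _ _) htpre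
          (seg_preconn _ _)
  have hWpre : IsPreconnected (⋃₀ {t | t ⊆ comb n ∩ ball (((0:ℝ), y0) : ℝ×ℝ) (tw m) ∧
      IsPreconnected t ∧ ((tw (m+1), y0) : ℝ×ℝ) ∈ t}) :=
    isPreconnected_sUnion ((tw (m+1), y0) : ℝ×ℝ) _ (fun s hs => hs.2.2) (fun s hs => hs.2.1)
  have hWV : ⋃₀ {t | t ⊆ comb n ∩ ball (((0:ℝ), y0) : ℝ×ℝ) (tw m) ∧
      IsPreconnected t ∧ ((tw (m+1), y0) : ℝ×ℝ) ∈ t} ⊆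
      comb n ∩ ball (((0:ℝ), y0) : ℝ×ℝ) (tw m) := sUnion_subset (fun s hs => hs.1)
  refine IsPreconnected.subset_closure hWpre hWV ?_
  rintro ⟨x, y⟩ hq
  have hx0 : 0 ≤ x := (comb_subset hn1 hq.1).1.1
  rcases eq_or_lt_of_le hx0 with h0 | h0
  · -- on the limit tooth: approximate by teeth
    obtain ⟨hbx, hby⟩ := mem_ball_iff.1 hq.2
    simp only at hbx hby
    rw [Metric.mem_closure_iff]
    intro δ hδ
    obtain ⟨k0, hk0⟩ := exists_tw_lt hδ
    have hyI : y ∈ Icc (0:ℝ) 1 := by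
      rcases hq.1 with ⟨_, hyI⟩ | hI
      · exact hyI
      · obtain ⟨k', hxc, _⟩ := mem_iUnion.1 hI
        simp only at hxc
        exact absurd (lt_of_lt_of_le (tw_pos (k'+1)) hxc.1) (by rw [← h0]; exact lt_irrefl 0)
    have hkm : tw (max k0 (m+1)) < δ :=
      lt_of_le_of_lt (tw_le_tw.2 (le_max_left _ _)) hk0
    have hkm2 : tw (max k0 (m+1)) < tw m :=
      lt_of_le_of_lt (tw_le_tw.2 (le_max_right _ _)) (tw_lt_tw.2 (by omega))
    have hwV : ((tw (max k0 (m+1)), y) : ℝ×ℝ) ∈ comb n ∩ ball (((0:ℝ), y0) : ℝ×ℝ) (tw m) := by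
      refine ⟨Or.inl ⟨tw_mem_P _, hyI⟩, ?_⟩
      rw [mem_ball_iff]
      constructor
      · simp only
        rw [sub_zero, abs_of_pos (tw_pos _)]
        exact hkm2
      · simpa using hby
    obtain ⟨t, htsub, htpre, ht0, htq⟩ := key _ hwV (by simp only; exact tw_pos _)
    refine ⟨(tw (max k0 (m+1)), y), mem_sUnion.2 ⟨t, ⟨htsub, htpre, ht0⟩, htq⟩, ?_⟩
    rw [Prod.dist_eq]
    apply max_lt
    · simp only
      rw [← h0, Real.dist_eq]
      rw [abs_sub_comm, sub_zero, abs_of_pos (tw_pos _)]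
      exact hkm
    · simp only
      rw [Real.dist_eq, sub_self, abs_zero]
      exact hδ
  · obtain ⟨t, htsub, htpre, ht0, htq⟩ := key (x, y) hq h0
    exact subset_closure (mem_sUnion.2 ⟨t, ⟨htsub, htpre, ht0⟩, htq⟩)


lemma preconn_ball_comb {n : ℕ} (hn : 2 ≤ n) {p : ℝ×ℝ} (hp : p ∈ comb n) {ε : ℝ}
    (hε : 0 < ε) : ∃ r, 0 < r ∧ r ≤ ε ∧ IsPreconnected (comb n ∩ ball p r) := by
  have hn1 : 1 ≤ n := by omega
  obtain ⟨x, y⟩ := p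
  rcases hp with ⟨hxP, hyI⟩ | hq
  · simp only at hxP hyI
    rcases hxP with h0 | ⟨k, rfl⟩
    · subst h0
      obtain ⟨m, hm⟩ := exists_tw_lt hε
      exact ⟨tw m, tw_pos m, hm.le, preconn_ball_limit hn hyI m⟩
    · refine ⟨min ε (tw (k+1)), lt_min hε (tw_pos _), min_le_left _ _, ?_⟩
      exact preconn_ball_tooth hn1 hyI (lt_min hε (tw_pos _)) (min_le_right _ _)
  · obtain ⟨k, hxc, hyH⟩ := mem_iUnion.1 hq
    simp only at hxc hyH
    rcases eq_or_lt_of_le hxc.1 with he1 | hx1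
    · -- x = tw (k+1): tooth point
      have hyI : y ∈ Icc (0:ℝ) 1 := heights_mem_Icc hn1 hyH
      rw [← he1]
      refine ⟨min ε (tw (k+2)), lt_min hε (tw_pos _), min_le_left _ _, ?_⟩
      exact preconn_ball_tooth hn1 hyI (lt_min hε (tw_pos _)) (min_le_right _ _)
    rcases eq_or_lt_of_le hxc.2 with he2 | hx2
    · -- x = tw k
      have hyI : y ∈ Icc (0:ℝ) 1 := heights_mem_Icc hn1 hyH
      rw [he2]
      refine ⟨min ε (tw (k+1)), lt_min hε (tw_pos _), min_le_left _ _, ?_⟩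
      exact preconn_ball_tooth hn1 hyI (lt_min hε (tw_pos _)) (min_le_right _ _)
    · -- interior bridge point
      have hinv : (0:ℝ) < ((n:ℝ)^k)⁻¹ := by
        have : (0:ℝ) < (n:ℝ)^k := by positivity
        exact inv_pos.2 this
      refine ⟨min (min ε (x - tw (k+1))) (min (tw k - x) ((n:ℝ)^k)⁻¹), ?_, ?_, ?_⟩
      · exact lt_min (lt_min hε (by linarith)) (lt_min (by linarith) hinv)
      · exact le_trans (min_le_left _ _) (min_le_left _ _)
      · refine preconn_ball_bridge hn1 hxc hyH (lt_min (lt_min hε (by linarith))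
          (lt_min (by linarith) hinv)) ?_ ?_ ?_
        · exact le_trans (min_le_left _ _) (min_le_right _ _)
        · exact le_trans (min_le_right _ _) (min_le_left _ _)
        · exact le_trans (min_le_right _ _) (min_le_right _ _)

lemma locallyConnected_comb {n : ℕ} (hn : 2 ≤ n) : LocallyConnectedSpace (comb n) := by
  rw [locallyConnectedSpace_iff_connected_subsets]
  rintro ⟨p, hp⟩ U hU
  rw [nhds_subtype_eq_comap] at hU
  obtain ⟨s, hs, hsub⟩ := hU
  obtain ⟨ε, hε, hball⟩ := Metric.mem_nhds_iff.1 hs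
  obtain ⟨r, hr0, hrε, hpre⟩ := preconn_ball_comb hn hp hε
  refine ⟨Subtype.val ⁻¹' ball p r, ?_, ?_, ?_⟩
  · rw [nhds_subtype_eq_comap]
    exact Filter.preimage_mem_comap (ball_mem_nhds _ hr0)
  · rw [← Topology.IsInducing.subtypeVal.isPreconnected_image, Subtype.image_preimage_coe]
    exact hpre
  · intro z hz
    exact hsub (hball (lt_of_lt_of_le hz (by exact hrε) : dist z.val p < ε))

lemma c0_not_mem_P {k : ℕ} : tw (k+1) + tw (k+2) ∉ P := by
  rintro (h0 | ⟨j, hj⟩)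
  · linarith [tw_pos (k+1), tw_pos (k+2), h0]
  · -- tw j = tw (k+1) + tw (k+2) = 3 * tw (k+2)
    have h3 : tw j = 3 * tw (k+2) := by
      have := two_tw (k+1)
      have e : tw (k+1+1) = tw (k+2) := by norm_num
      rw [e] at this
      linarith [hj.symm]
    have hcast : (2:ℝ)^(k+2) = 3 * 2^j := by
      have htwj : tw j = ((2:ℝ)^j)⁻¹ := by rw [tw, inv_pow]
      have htwk : tw (k+2) = ((2:ℝ)^(k+2))⁻¹ := by rw [tw, inv_pow]
      rw [htwj, htwk] at h3
      have h2j : ((2:ℝ)^j) ≠ 0 := by positivity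
      have h2k : ((2:ℝ)^(k+2)) ≠ 0 := by positivity
      field_simp at h3
      linarith
    have hnat : (2:ℕ)^(k+2) = 3 * 2^j := by exact_mod_cast hcast
    have hdvd : (3:ℕ) ∣ 2^(k+2) := ⟨2^j, hnat⟩
    have := Nat.Prime.dvd_of_dvd_pow Nat.prime_three hdvd
    omega

lemma not_lc_T : ¬ LocallyConnectedSpace ↥T := by
  intro hlc
  have hpT : (((0:ℝ), (1/2:ℝ)) : ℝ×ℝ) ∈ T := Or.inl ⟨mem_insert _ _, by norm_num, by norm_num⟩
  set p : ↥T := ⟨((0:ℝ), (1/2:ℝ)), hpT⟩ with hpdef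
  have hU : (Subtype.val ⁻¹' ball (((0:ℝ),(1/2:ℝ)) : ℝ×ℝ) (1/4) : Set ↥T) ∈ nhds p := by
    rw [hpdef, nhds_subtype_eq_comap]
    exact Filter.preimage_mem_comap (ball_mem_nhds _ (by norm_num))
  obtain ⟨V, hV, hVpre, hVsub⟩ := locallyConnectedSpace_iff_connected_subsets.1 hlc p _ hU
  have hpV : p ∈ V := mem_of_mem_nhds hV
  rw [hpdef, nhds_subtype_eq_comap] at hV
  obtain ⟨s, hs, hsub⟩ := hV
  obtain ⟨ε, hε, hball⟩ := Metric.mem_nhds_iff.1 hs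
  obtain ⟨k, hk⟩ := exists_tw_lt hε
  have hV'pre : IsPreconnected (Subtype.val '' V) :=
    Topology.IsInducing.subtypeVal.isPreconnected_image.2 hVpre
  have hc1 : tw (k+1) + tw (k+2) < tw k := by
    have h1 := two_tw (k+1)
    have e : tw (k+1+1) = tw (k+2) := by norm_num
    rw [e] at h1
    have h2 := two_tw k
    linarith [tw_pos (k+2)]
  have hc0pos : 0 < tw (k+1) + tw (k+2) := by linarith [tw_pos (k+1), tw_pos (k+2)]
  -- the two separating open sets
  have hsep := hV'pre {z : ℝ×ℝ | z.1 < tw (k+1) + tw (k+2)}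
    {z : ℝ×ℝ | tw (k+1) + tw (k+2) < z.1}
    (isOpen_lt continuous_fst continuous_const)
    (isOpen_lt continuous_const continuous_fst)
  have hcover : Subtype.val '' V ⊆ {z : ℝ×ℝ | z.1 < tw (k+1) + tw (k+2)} ∪
      {z : ℝ×ℝ | tw (k+1) + tw (k+2) < z.1} := by
    rintro z ⟨v, hv, rfl⟩
    have hzT : (v : ℝ×ℝ) ∈ T := v.2
    have hzb : (v : ℝ×ℝ) ∈ ball (((0:ℝ),(1/2:ℝ)) : ℝ×ℝ) (1/4) := hVsub hv
    rcases lt_trichotomy (v : ℝ×ℝ).1 (tw (k+1) + tw (k+2)) with h | h | h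
    · exact Or.inl h
    · exfalso
      obtain ⟨_, hby⟩ := mem_ball_iff.1 hzb
      rcases hzT with ⟨hxP, _⟩ | ⟨_, hy01⟩
      · exact c0_not_mem_P (h ▸ hxP)
      · rcases hy01 with h1 | h1
        · rw [h1] at hby
          rcases abs_lt.1 hby with ⟨h2, h3⟩
          norm_num at h2
        · simp only [mem_singleton_iff] at h1
          rw [h1] at hby
          rcases abs_lt.1 hby with ⟨h2, h3⟩
          norm_num at h2 h3
    · exact Or.inr h
  have hmem1 : (((0:ℝ),(1/2:ℝ)) : ℝ×ℝ) ∈ Subtype.val '' V ∩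
      {z : ℝ×ℝ | z.1 < tw (k+1) + tw (k+2)} :=
    ⟨⟨p, hpV, rfl⟩, hc0pos⟩
  have htwkT : ((tw k, (1/2:ℝ)) : ℝ×ℝ) ∈ T := Or.inl ⟨tw_mem_P k, by norm_num, by norm_num⟩
  have hmem2 : ((tw k, (1/2:ℝ)) : ℝ×ℝ) ∈ Subtype.val '' V ∩
      {z : ℝ×ℝ | tw (k+1) + tw (k+2) < z.1} := by
    refine ⟨⟨⟨(tw k, (1/2:ℝ)), htwkT⟩, hsub (hball ?_), rfl⟩, hc1⟩
    rw [mem_ball, Prod.dist_eq]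
    apply max_lt
    · rw [Real.dist_eq, sub_zero, abs_of_pos (tw_pos _)]
      exact hk
    · rw [Real.dist_eq, sub_self, abs_zero]
      exact hε
  obtain ⟨z, _, hz1, hz2⟩ := hsep hcover ⟨_, hmem1⟩ ⟨_, hmem2⟩
  simp only [mem_setOf_eq] at hz1 hz2
  linarith

end CombNLC

/-- There exist two Peano continua in the plane whose intersection is a continuum that is
not locally connected. -/
theorem exists_peano_continua_with_non_lc_intersection :
    ∃ X Y : Set (ℝ × ℝ),
      IsCompact X ∧ IsConnected X ∧ LocallyConnectedSpace X ∧
      IsCompact Y ∧ IsConnected Y ∧ LocallyConnectedSpace Y ∧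
      IsCompact (X ∩ Y) ∧ IsConnected (X ∩ Y) ∧ ¬ LocallyConnectedSpace ↥(X ∩ Y) := by
  refine ⟨CombNLC.comb 2, CombNLC.comb 3, CombNLC.isCompact_comb (by norm_num),
    CombNLC.isConnected_comb (by norm_num), CombNLC.locallyConnected_comb (by norm_num),
    CombNLC.isCompact_comb (by norm_num), CombNLC.isConnected_comb (by norm_num),
    CombNLC.locallyConnected_comb (by norm_num), ?_, ?_, ?_⟩
  · rw [CombNLC.comb_inter]; exact CombNLC.isCompact_T
  · rw [CombNLC.comb_inter]; exact CombNLC.isConnected_T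
  · rw [CombNLC.comb_inter]; exact CombNLC.not_lc_T
end

section
/- Let K ⊂ ℝ² be a connected compact set and U the unbounded connected component of ℝ² \ K. Then ∂U is a nonempty compact connected set. -/
open Set Metric Complex


lemma intval_const {X : Type*} [TopologicalSpace X] {s : Set X} (hs : IsPreconnected s)
    {f : X → ℝ} (hf : ContinuousOn f s) (hint : ∀ x ∈ s, ∃ n : ℤ, f x = n)
    {x y : X} (hx : x ∈ s) (hy : y ∈ s) : f x = f y := by
  by_contra hne
  wlog hlt : f x < f y generalizing x y
  · exact this hy hx (Ne.symm hne) (lt_of_le_of_ne (not_lt.1 hlt) (Ne.symm hne))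
  obtain ⟨nx, hnx⟩ := hint x hx
  obtain ⟨ny, hny⟩ := hint y hy
  have hnxny : nx < ny := by exact_mod_cast hnx ▸ hny ▸ hlt
  have hmid : (nx : ℝ) + 1/2 ∈ Icc (f x) (f y) := by
    constructor
    · rw [hnx]; linarith
    · rw [hny]
      have : (nx : ℝ) + 1 ≤ ny := by exact_mod_cast hnxny
      linarith
  obtain ⟨z, hz, hfz⟩ := hs.intermediate_value hx hy hf hmid
  obtain ⟨m, hm⟩ := hint z hz
  rw [hm] at hfz
  have : (2 * m : ℝ) = 2 * nx + 1 := by linarith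
  have : (2 * m : ℤ) = 2 * nx + 1 := by exact_mod_cast this
  omega

lemma intvalC_const {X : Type*} [TopologicalSpace X] {s : Set X} (hs : IsPreconnected s)
    {f : X → ℂ} (hf : ContinuousOn f s) (hint : ∀ x ∈ s, ∃ n : ℤ, f x = n)
    {x y : X} (hx : x ∈ s) (hy : y ∈ s) : f x = f y := by
  have hre : ContinuousOn (fun x => (f x).re) s := Complex.continuous_re.comp_continuousOn hf
  have hintre : ∀ x ∈ s, ∃ n : ℤ, (f x).re = n := by
    intro x hx; obtain ⟨n, hn⟩ := hint x hx; exact ⟨n, by rw [hn]; simp⟩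
  have h := intval_const hs hre hintre hx hy
  obtain ⟨nx, hnx⟩ := hint x hx
  obtain ⟨ny, hny⟩ := hint y hy
  rw [hnx, hny] at h ⊢
  simp only [Complex.intCast_re] at h
  exact_mod_cast h

lemma log_step {X : Type*} [TopologicalSpace X] {s : Set X} {f g : X → ℂ}
    (hf : ContinuousOn f s) (hg : ContinuousOn g s)
    (hclose : ∀ x ∈ s, ‖f x - g x‖ < ‖g x‖)
    (h : ∃ L : X → ℂ, ContinuousOn L s ∧ ∀ x ∈ s, Complex.exp (L x) = g x) :
    ∃ L : X → ℂ, ContinuousOn L s ∧ ∀ x ∈ s, Complex.exp (L x) = f x := by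
  obtain ⟨L, hL, hLe⟩ := h
  have hgne : ∀ x ∈ s, g x ≠ 0 := by
    intro x hx h0
    have := hclose x hx; rw [h0] at this; simp at this
    exact absurd this (norm_nonneg _).not_gt
  have hfne : ∀ x ∈ s, f x ≠ 0 := by
    intro x hx h0
    have := hclose x hx; rw [h0] at this; simp at this
  have hdiv : ContinuousOn (fun x => f x / g x) s := hf.div hg hgne
  have hslit : ∀ x ∈ s, f x / g x ∈ Complex.slitPlane := by
    intro x hx
    have h1 : ‖f x / g x - 1‖ < 1 := by
      rw [div_sub_one (hgne x hx), norm_div]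
      rw [div_lt_one (norm_pos_iff.2 (hgne x hx))]
      exact hclose x hx
    have := Complex.mem_slitPlane_of_norm_lt_one (z := f x / g x - 1) h1
    simpa using this
  refine ⟨fun x => L x + Complex.log (f x / g x), hL.add (hdiv.clog hslit), ?_⟩
  intro x hx
  rw [Complex.exp_add, hLe x hx, Complex.exp_log (div_ne_zero (hfne x hx) (hgne x hx))]
  rw [mul_div_cancel₀ _ (hgne x hx)]


lemma exists_log_ball {f : ℝ × ℝ → ℂ} (hf : Continuous f) (hne : ∀ x, f x ≠ 0) (R : ℝ)
    (hR : 0 ≤ R) :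
    ∃ L : ℝ × ℝ → ℂ, ContinuousOn L (closedBall 0 R) ∧
      ∀ x ∈ closedBall (0 : ℝ × ℝ) R, Complex.exp (L x) = f x := by
  set C : Set (ℝ × ℝ) := closedBall 0 R with hC
  have hCc : IsCompact C := isCompact_closedBall _ _
  have hC0 : (0 : ℝ × ℝ) ∈ C := mem_closedBall_self hR
  -- minimum of ‖f‖ on C
  obtain ⟨x₀, hx₀C, hx₀'⟩ := hCc.exists_isMinOn ⟨0, hC0⟩ (hf.norm.continuousOn)
  have hx₀ : ∀ y ∈ C, ‖f x₀‖ ≤ ‖f y‖ := fun y hy => hx₀' hy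
  set δ : ℝ := ‖f x₀‖ with hδ
  have hδpos : 0 < δ := norm_pos_iff.2 (hne x₀)
  -- smul stays in C
  have hsmul : ∀ t : ℝ, t ∈ Icc (0:ℝ) 1 → ∀ x ∈ C, t • x ∈ C := by
    intro t ht x hx
    rw [hC, mem_closedBall_zero_iff] at hx ⊢
    rw [norm_smul, Real.norm_eq_abs, _root_.abs_of_nonneg ht.1]
    calc t * ‖x‖ ≤ 1 * ‖x‖ := by
          apply mul_le_mul_of_nonneg_right ht.2 (norm_nonneg _)
      _ = ‖x‖ := one_mul _
      _ ≤ R := hx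
  -- uniform continuity of G on [0,1] × C
  set G : ℝ × (ℝ × ℝ) → ℂ := fun p => f (p.1 • p.2) with hG
  have hGc : Continuous G := hf.comp (continuous_fst.smul continuous_snd)
  have hS : IsCompact ((Icc (0:ℝ) 1) ×ˢ C) := isCompact_Icc.prod hCc
  have hU : UniformContinuousOn G ((Icc (0:ℝ) 1) ×ˢ C) :=
    hS.uniformContinuousOn_of_continuous hGc.continuousOn
  rw [Metric.uniformContinuousOn_iff] at hU
  obtain ⟨η, hηpos, hη⟩ := hU δ hδpos
  obtain ⟨N, hN⟩ := exists_nat_one_div_lt hηpos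
  -- key: ∀ n ≤ N+1, log of x ↦ f ((n/(N+1)) • x) exists on C
  have key : ∀ n : ℕ, n ≤ N + 1 → ∃ L : ℝ × ℝ → ℂ, ContinuousOn L C ∧
      ∀ x ∈ C, Complex.exp (L x) = f (((n : ℝ)/(N+1)) • x) := by
    intro n hn
    induction n with
    | zero =>
      obtain ⟨w, hw⟩ : f 0 ∈ range Complex.exp := by
        rw [Complex.range_exp]; exact hne 0
      exact ⟨fun _ => w, continuousOn_const, fun x _ => by simp [hw]⟩
    | succ m ih =>
      have hm : m ≤ N + 1 := le_of_lt (Nat.lt_of_succ_le hn)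
      have hmem : ∀ (k : ℕ), k ≤ N + 1 → ∀ x ∈ C, ((k : ℝ)/(N+1)) • x ∈ C := by
        intro k hk x hx
        apply hsmul _ _ x hx
        constructor
        · positivity
        · rw [div_le_one (by positivity)]
          exact_mod_cast hk
      apply log_step (f := fun x => f ((((m+1 : ℕ) : ℝ)/((N:ℝ)+1)) • x))
        (g := fun x => f ((((m : ℝ)/((N:ℝ)+1))) • x))
      · exact hf.comp_continuousOn (by fun_prop)
      · exact hf.comp_continuousOn (by fun_prop)
      · intro x hx
        have h1 : (((m+1 : ℕ) : ℝ)/(N+1), x) ∈ (Icc (0:ℝ) 1) ×ˢ C := by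
          constructor
          · constructor
            · positivity
            · simp only [div_le_one (by positivity : (0:ℝ) < (N:ℝ)+1)]
              exact_mod_cast hn
          · exact hx
        have h2 : (((m : ℝ)/(N+1)), x) ∈ (Icc (0:ℝ) 1) ×ˢ C := by
          constructor
          · constructor
            · positivity
            · rw [div_le_one (by positivity)]; exact_mod_cast hm
          · exact hx
        have hd : dist ((((m+1 : ℕ) : ℝ)/(N+1), x)) ((((m : ℝ)/(N+1)), x)) < η := by
          rw [Prod.dist_eq]
          simp only [dist_self, Real.dist_eq]
          have heq : ((m+1 : ℕ) : ℝ)/(N+1) - (m : ℝ)/(N+1) = 1/(N+1) := by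
            push_cast; ring
          rw [heq, _root_.abs_of_nonneg (by positivity : (0:ℝ) ≤ 1/((N:ℝ)+1))]
          exact max_lt hN hηpos
        have := hη _ h1 _ h2 hd
        calc ‖f ((((m+1 : ℕ) : ℝ)/(N+1)) • x) - f (((m : ℝ)/(N+1)) • x)‖
            = dist (G (((m+1 : ℕ) : ℝ)/(N+1), x)) (G ((((m : ℝ)/(N+1)), x))) := by
              rw [dist_eq_norm]
          _ < δ := this
          _ ≤ ‖f (((m : ℝ)/(N+1)) • x)‖ := hx₀ _ (hmem m hm x hx)
      · exact ih hm
  obtain ⟨L, hL, hLe⟩ := key (N+1) le_rfl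
  refine ⟨L, hL, fun x hx => ?_⟩
  have := hLe x hx
  push_cast at this
  rwa [div_self (by positivity : ((N:ℝ)+1) ≠ 0), one_smul] at this


private noncomputable def patch (L : ℕ → ℝ × ℝ → ℂ) : ℕ → ℝ × ℝ → ℂ
  | 0 => L 0
  | (n+1) => fun x => L (n+1) x + (patch L n 0 - L (n+1) 0)

lemma patch_succ (L : ℕ → ℝ × ℝ → ℂ) (n : ℕ) (x : ℝ × ℝ) :
    patch L (n+1) x = L (n+1) x + (patch L n 0 - L (n+1) 0) := rfl

lemma patch_zero (L : ℕ → ℝ × ℝ → ℂ) (x : ℝ × ℝ) : patch L 0 x = L 0 x := rfl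

lemma exists_log_global {f : ℝ × ℝ → ℂ} (hf : Continuous f) (hne : ∀ x, f x ≠ 0) :
    ∃ L : ℝ × ℝ → ℂ, Continuous L ∧ ∀ x, Complex.exp (L x) = f x := by
  have hπ : (2 * (Real.pi : ℂ) * I) ≠ 0 := by
    simp [Real.pi_ne_zero, Complex.I_ne_zero]
  -- choose logs on balls of radius n
  have hball : ∀ n : ℕ, ∃ L : ℝ × ℝ → ℂ, ContinuousOn L (closedBall 0 (n:ℝ)) ∧
      ∀ x ∈ closedBall (0 : ℝ × ℝ) (n:ℝ), Complex.exp (L x) = f x :=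
    fun n => exists_log_ball hf hne n n.cast_nonneg
  choose L₀ hL₀c hL₀e using hball
  -- adjusted sequence
  set h : ℕ → (ℝ × ℝ → ℂ) := patch L₀ with hhdef
  have hsucc : ∀ n x, h (n+1) x = L₀ (n+1) x + (h n 0 - L₀ (n+1) 0) := patch_succ L₀
  have hmem0 : ∀ n : ℕ, (0 : ℝ × ℝ) ∈ closedBall (0 : ℝ × ℝ) (n:ℝ) :=
    fun n => mem_closedBall_self n.cast_nonneg
  have hI : ∀ n : ℕ, ContinuousOn (h n) (closedBall 0 (n:ℝ)) ∧
      ∀ x ∈ closedBall (0 : ℝ × ℝ) (n:ℝ), Complex.exp (h n x) = f x := by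
    intro n
    induction n with
    | zero =>
      constructor
      · exact (hL₀c 0).congr (fun x _ => by rw [hhdef, patch_zero])
      · intro x hx; rw [hhdef, patch_zero]; exact hL₀e 0 x hx
    | succ m ih =>
      constructor
      · exact (hL₀c (m+1)).add continuousOn_const
      · intro x hx
        rw [hsucc, Complex.exp_add, hL₀e (m+1) x hx, Complex.exp_sub,
          ih.2 0 (hmem0 m), hL₀e (m+1) 0 (hmem0 (m+1))]
        rw [div_self (hne 0), mul_one]
  -- agreement
  have hagree : ∀ n : ℕ, ∀ x ∈ closedBall (0 : ℝ × ℝ) (n:ℝ), h (n+1) x = h n x := by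
    intro n x hx
    have hpc : IsPreconnected (closedBall (0 : ℝ × ℝ) (n:ℝ)) :=
      (convex_closedBall _ _).isPreconnected
    have hsub : closedBall (0 : ℝ × ℝ) (n:ℝ) ⊆ closedBall 0 ((n:ℝ)+1) := by
      apply closedBall_subset_closedBall; linarith
    have hsub' : closedBall (0 : ℝ × ℝ) (n:ℝ) ⊆ closedBall 0 (((n+1 : ℕ)):ℝ) := by
      apply closedBall_subset_closedBall; push_cast; linarith
    set d : ℝ × ℝ → ℂ := fun y => (h (n+1) y - h n y) / (2 * Real.pi * I) with hd
    have hdc : ContinuousOn d (closedBall 0 (n:ℝ)) :=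
      (((hI (n+1)).1.mono hsub').sub (hI n).1).div_const _
    have hint : ∀ y ∈ closedBall (0 : ℝ × ℝ) (n:ℝ), ∃ k : ℤ, d y = k := by
      intro y hy
      have he : Complex.exp (h (n+1) y - h n y) = 1 := by
        rw [Complex.exp_sub, (hI (n+1)).2 y (hsub' hy), (hI n).2 y hy, div_self (hne y)]
      rw [Complex.exp_eq_one_iff] at he
      obtain ⟨k, hk⟩ := he
      exact ⟨k, by rw [hd]; simp only; rw [hk, mul_div_cancel_right₀ _ hπ]⟩
    have hd0 : d 0 = 0 := by
      have h00 : h (n+1) 0 = h n 0 := by rw [hsucc]; ring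
      rw [hd]; simp only [h00, sub_self, zero_div]
    have h1 := intvalC_const hpc hdc hint hx (hmem0 n)
    rw [hd0] at h1
    rw [hd] at h1
    simp only at h1
    have h2 : h (n+1) x - h n x = 0 := (div_eq_zero_iff.1 h1).resolve_right hπ
    exact sub_eq_zero.1 h2
  -- stabilization
  have hstab : ∀ n m : ℕ, n ≤ m → ∀ x ∈ closedBall (0 : ℝ × ℝ) (n:ℝ), h m x = h n x := by
    intro n m hnm
    induction m with
    | zero =>
      intro x hx
      have : n = 0 := Nat.le_zero.1 hnm
      subst this; rfl
    | succ k ih =>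
      intro x hx
      rcases Nat.lt_or_ge n (k+1) with hlt | hge
      · have hnk : n ≤ k := Nat.lt_succ_iff.1 hlt
        have hxk : x ∈ closedBall (0 : ℝ × ℝ) (k:ℝ) :=
          closedBall_subset_closedBall (by exact_mod_cast hnk) hx
        rw [hagree k x hxk, ih hnk x hx]
      · have : n = k+1 := le_antisymm hnm hge
        subst this; rfl
  -- global definition
  set g : ℝ × ℝ → ℂ := fun x => h (⌈‖x‖⌉₊ + 1) x with hg
  have hmem : ∀ x : ℝ × ℝ, x ∈ closedBall (0 : ℝ × ℝ) ((⌈‖x‖⌉₊ + 1 : ℕ) : ℝ) := by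
    intro x
    rw [mem_closedBall_zero_iff]
    push_cast
    linarith [Nat.le_ceil ‖x‖]
  refine ⟨g, ?_, fun x => (hI _).2 x (hmem x)⟩
  rw [continuous_iff_continuousAt]
  intro x₀
  set n : ℕ := ⌈‖x₀‖⌉₊ + 1 with hn
  have hx₀n : ‖x₀‖ < (n:ℝ) := by
    rw [hn]; push_cast; linarith [Nat.le_ceil ‖x₀‖]
  have heq : ∀ y ∈ ball (0 : ℝ × ℝ) (n:ℝ), g y = h (n+1) y := by
    intro y hy
    rw [mem_ball_zero_iff] at hy
    have hiy : ⌈‖y‖⌉₊ + 1 ≤ n + 1 := by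
      have : ⌈‖y‖⌉₊ ≤ n := Nat.ceil_le.2 hy.le
      omega
    rw [hg]
    exact (hstab _ _ hiy y (hmem y)).symm
  have hx₀ball : x₀ ∈ ball (0 : ℝ × ℝ) (n:ℝ) := mem_ball_zero_iff.2 hx₀n
  have hcont : ContinuousAt (h (n+1)) x₀ := by
    apply ((hI (n+1)).1.mono ?_).continuousAt (IsOpen.mem_nhds isOpen_ball hx₀ball)
    · exact ball_subset_closedBall.trans (closedBall_subset_closedBall (by push_cast; linarith))
  apply hcont.congr
  filter_upwards [IsOpen.mem_nhds isOpen_ball hx₀ball] with y hy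
  exact (heq y hy).symm


lemma plane_unicoherence {A B : Set (ℝ × ℝ)} (hA : IsClosed A) (hB : IsClosed B)
    (hAc : IsPreconnected A) (hBc : IsPreconnected B) (hAB : A ∪ B = univ) :
    IsPreconnected (A ∩ B) := by
  classical
  by_contra hnc
  have hABclosed : IsClosed (A ∩ B) := hA.inter hB
  rw [isPreconnected_iff_subset_of_fully_disjoint_closed hABclosed] at hnc
  push_neg at hnc
  obtain ⟨u, v, hu, hv, hsub, hdisj, hnu, hnv⟩ := hnc
  set F₁ : Set (ℝ × ℝ) := (A ∩ B) ∩ u with hF₁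
  set F₂ : Set (ℝ × ℝ) := (A ∩ B) ∩ v with hF₂
  have hF₁c : IsClosed F₁ := hABclosed.inter hu
  have hF₂c : IsClosed F₂ := hABclosed.inter hv
  have hF₁F₂ : Disjoint F₁ F₂ := (hdisj.mono inf_le_right inf_le_right)
  have hF₁ne : F₁.Nonempty := by
    obtain ⟨x, hx, hxv⟩ := not_subset.1 hnv
    exact ⟨x, hx, (hsub hx).resolve_right hxv⟩
  have hF₂ne : F₂.Nonempty := by
    obtain ⟨x, hx, hxu⟩ := not_subset.1 hnu
    exact ⟨x, hx, (hsub hx).resolve_left hxu⟩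
  have hunion : F₁ ∪ F₂ = A ∩ B := by
    apply subset_antisymm
    · exact union_subset inter_subset_left inter_subset_left
    · intro x hx
      rcases hsub hx with h | h
      · exact Or.inl ⟨hx, h⟩
      · exact Or.inr ⟨hx, h⟩
  -- Urysohn
  obtain ⟨α, hα1, hα2, hα01⟩ := exists_continuous_zero_one_of_isClosed hF₁c hF₂c hF₁F₂
  -- the circle-valued map
  set φ : ℝ × ℝ → ℂ := A.piecewise (fun x => Complex.exp (Real.pi * I * (α x)))
    (fun x => Complex.exp (-(Real.pi * I * (α x)))) with hφ
  have hfrA : frontier A ⊆ A ∩ B := by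
    intro x hx
    refine ⟨hA.frontier_subset hx, ?_⟩
    have h1 : frontier A ⊆ closure Aᶜ := by
      rw [frontier_eq_closure_inter_closure]; exact inter_subset_right
    have h2 : Aᶜ ⊆ B := by
      intro y hy
      rcases (hAB ▸ mem_univ y : y ∈ A ∪ B) with h | h
      · exact absurd h hy
      · exact h
    exact hB.closure_subset_iff.2 h2 (h1 hx)
  have hαint : ∀ x ∈ A ∩ B, α x = 0 ∨ α x = 1 := by
    intro x hx
    rw [← hunion] at hx
    rcases hx with h | h
    · left; exact hα1 h
    · right; exact hα2 h
  have hφcont : Continuous φ := by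
    apply Continuous.piecewise
    · intro a ha
      rcases hαint a (hfrA ha) with h | h
      · rw [h]; norm_num
      · rw [h]; norm_num
    · exact Complex.continuous_exp.comp (by continuity)
    · exact Complex.continuous_exp.comp (by continuity)
  have hφne : ∀ x, φ x ≠ 0 := by
    intro x
    rw [hφ]
    by_cases hxA : x ∈ A
    · rw [Set.piecewise_eq_of_mem _ _ _ hxA]; exact Complex.exp_ne_zero _
    · rw [Set.piecewise_eq_of_notMem _ _ _ hxA]; exact Complex.exp_ne_zero _
  obtain ⟨L, hLc, hLe⟩ := exists_log_global hφcont hφne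
  have hπI : (2 * (Real.pi : ℂ) * I) ≠ 0 := by
    simp [Real.pi_ne_zero, Complex.I_ne_zero]
  -- on A
  set mA : ℝ × ℝ → ℂ := fun x => (L x - Real.pi * I * (α x)) / (2 * Real.pi * I) with hmA
  set mB : ℝ × ℝ → ℂ := fun x => (L x + Real.pi * I * (α x)) / (2 * Real.pi * I) with hmB
  have hmAc : ContinuousOn mA A := by
    apply ContinuousOn.div_const
    exact hLc.continuousOn.sub (by fun_prop)
  have hmBc : ContinuousOn mB B := by
    apply ContinuousOn.div_const
    exact hLc.continuousOn.add (by fun_prop)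
  have hmAint : ∀ x ∈ A, ∃ k : ℤ, mA x = k := by
    intro x hx
    have : Complex.exp (L x - Real.pi * I * (α x)) = 1 := by
      rw [Complex.exp_sub, hLe x, hφ, Set.piecewise_eq_of_mem _ _ _ hx,
        div_self (Complex.exp_ne_zero _)]
    rw [Complex.exp_eq_one_iff] at this
    obtain ⟨k, hk⟩ := this
    exact ⟨k, by rw [hmA]; simp only; rw [hk, mul_div_cancel_right₀ _ hπI]⟩
  have hmBint : ∀ x ∈ B, ∃ k : ℤ, mB x = k := by
    intro x hx
    by_cases hxA : x ∈ A
    · rcases hαint x ⟨hxA, hx⟩ with h | h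
      · have h1 : Complex.exp (L x) = 1 := by
          have h2 := hLe x
          rw [hφ, Set.piecewise_eq_of_mem _ _ _ hxA, h] at h2
          simpa using h2
        rw [Complex.exp_eq_one_iff] at h1
        obtain ⟨k, hk⟩ := h1
        refine ⟨k, ?_⟩
        rw [hmB]; simp only
        rw [h, hk]
        push_cast
        rw [mul_zero, add_zero, mul_div_cancel_right₀ _ hπI]
      · have h1 : Complex.exp (L x - Real.pi * I) = 1 := by
          rw [Complex.exp_sub, hLe x, hφ, Set.piecewise_eq_of_mem _ _ _ hxA, h]
          norm_num
        rw [Complex.exp_eq_one_iff] at h1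
        obtain ⟨k, hk⟩ := h1
        have hLx : L x = (k : ℂ) * (2 * Real.pi * I) + Real.pi * I := by
          have := sub_eq_iff_eq_add.1 hk; exact this
        refine ⟨k + 1, ?_⟩
        rw [hmB]; simp only
        rw [h, hLx]
        push_cast
        field_simp
        ring
    · have : Complex.exp (L x + Real.pi * I * (α x)) = 1 := by
        rw [Complex.exp_add, hLe x, hφ, Set.piecewise_eq_of_notMem _ _ _ hxA,
          ← Complex.exp_add]
        ring_nf
        exact Complex.exp_zero
      rw [Complex.exp_eq_one_iff] at this
      obtain ⟨k, hk⟩ := this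
      exact ⟨k, by rw [hmB]; simp only; rw [hk, mul_div_cancel_right₀ _ hπI]⟩
  obtain ⟨a, haF₁⟩ := hF₁ne
  obtain ⟨b, hbF₂⟩ := hF₂ne
  have haAB : a ∈ A ∩ B := haF₁.1
  have hbAB : b ∈ A ∩ B := hbF₂.1
  have hαa : α a = 0 := hα1 haF₁
  have hαb : α b = 1 := hα2 hbF₂
  have hAab := intvalC_const hAc hmAc hmAint haAB.1 hbAB.1
  have hBab := intvalC_const hBc hmBc hmBint haAB.2 hbAB.2
  -- derive contradiction
  have e1 : mA a = mB a := by
    rw [hmA, hmB]; simp only [hαa]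
    norm_num
  have e2 : mB b = mA b + 1 := by
    rw [hmA, hmB]; simp only [hαb]
    rw [Complex.ofReal_one, mul_one]
    field_simp
    ring
  rw [hAab] at e1
  rw [e2, e1] at hBab
  simp at hBab


/-- If `K` is a compact connected planar set and `U` is the unbounded connected component
of its complement, then the boundary `∂U` is a nonempty compact connected set. -/
theorem frontier_unbounded_component_is_continuum (K : Set (ℝ × ℝ))
    (hKc : IsCompact K) (hKconn : IsConnected K) (U : Set (ℝ × ℝ))
    (hU : ∃ p ∈ Kᶜ, U = connectedComponentIn Kᶜ p)
    (hUnb : ¬ Bornology.IsBounded U) :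
    (frontier U).Nonempty ∧ IsCompact (frontier U) ∧ IsConnected (frontier U) := by
  obtain ⟨p, hp, rfl⟩ := hU
  set U := connectedComponentIn Kᶜ p with hUdef
  have hKopen : IsOpen Kᶜ := hKc.isClosed.isOpen_compl
  have hUopen : IsOpen U := hKopen.connectedComponentIn
  have hUne : U.Nonempty := (connectedComponentIn_nonempty_iff).2 hp
  have hUpc : IsPreconnected U := isPreconnected_connectedComponentIn
  have hUK : U ⊆ Kᶜ := connectedComponentIn_subset _ _
  have hKne : K.Nonempty := hKconn.nonempty
  -- frontier of any component of Kᶜ is contained in K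
  have hfrK : ∀ x : ℝ × ℝ, frontier (connectedComponentIn Kᶜ x) ⊆ K := by
    intro x z hz
    by_contra hzK
    set C := connectedComponentIn Kᶜ x with hC
    have hCopen : IsOpen C := hKopen.connectedComponentIn
    have hzcl : z ∈ closure C := hz.1
    have hznC : z ∉ C := fun h => hz.2 (by rwa [hCopen.interior_eq])
    obtain ⟨ε, hεpos, hεsub⟩ := Metric.isOpen_iff.1 hKopen z hzK
    obtain ⟨y, hyC, hyb⟩ := Metric.mem_closure_iff.1 hzcl ε hεpos
    have hyball : y ∈ ball z ε := by rwa [mem_ball, dist_comm]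
    have hpre : IsPreconnected (C ∪ ball z ε) :=
      IsPreconnected.union y hyC hyball isPreconnected_connectedComponentIn
        (convex_ball z ε).isPreconnected
    have hsub2 : C ∪ ball z ε ⊆ Kᶜ :=
      union_subset (connectedComponentIn_subset _ _) hεsub
    have hub : C ∪ ball z ε ⊆ connectedComponentIn Kᶜ y :=
      hpre.subset_connectedComponentIn (Or.inl hyC) hsub2
    have hCy : connectedComponentIn Kᶜ x = connectedComponentIn Kᶜ y :=
      connectedComponentIn_eq hyC
    have : z ∈ C := by rw [hC, hCy]; exact hub (Or.inr (mem_ball_self hεpos))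
    exact hznC this
  -- frontier of any nonempty component is nonempty
  have hfrne : ∀ x : ℝ × ℝ, x ∈ Kᶜ → (frontier (connectedComponentIn Kᶜ x)).Nonempty := by
    intro x hx
    by_contra hfe
    rw [not_nonempty_iff_eq_empty] at hfe
    have hclop : IsClopen (connectedComponentIn Kᶜ x) := isClopen_iff_frontier_eq_empty.2 hfe
    rcases isClopen_iff.1 hclop with h | h
    · exact (connectedComponentIn_nonempty_iff.2 hx).ne_empty h
    · obtain ⟨k, hk⟩ := hKne
      have : k ∈ Kᶜ := (h ▸ connectedComponentIn_subset Kᶜ x) (mem_univ k)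
      exact this hk
  -- parts of the conclusion
  have hfrU : frontier U ⊆ K := hfrK p
  have hfrUne : (frontier U).Nonempty := hfrne p hp
  have hcomp : IsCompact (frontier U) := hKc.of_isClosed_subset isClosed_frontier hfrU
  refine ⟨hfrUne, hcomp, ?_⟩
  -- Uᶜ is preconnected
  obtain ⟨k₀, hk₀⟩ := hKne
  have hBpc : IsPreconnected Uᶜ := by
    have hrepr : Uᶜ = ⋃₀ ((fun x => K ∪ closure (connectedComponentIn Kᶜ x)) '' Uᶜ) := by
      apply subset_antisymm
      · intro x hx
        refine mem_sUnion.2 ⟨K ∪ closure (connectedComponentIn Kᶜ x), mem_image_of_mem _ hx, ?_⟩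
        by_cases hxK : x ∈ K
        · exact Or.inl hxK
        · exact Or.inr (subset_closure (mem_connectedComponentIn hxK))
      · intro x hx
        obtain ⟨s, ⟨y, hyUc, rfl⟩, hxs⟩ := mem_sUnion.1 hx
        rcases hxs with h | h
        · exact fun hxU => (hUK hxU) h
        · -- x ∈ closure (component of y), y ∉ U
          intro hxU
          by_cases hyK : y ∈ Kᶜ
          · have hcc : closure (connectedComponentIn Kᶜ y)
                ⊆ connectedComponentIn Kᶜ y ∪ K := by
              intro z hz
              by_cases hzC : z ∈ connectedComponentIn Kᶜ y
              · exact Or.inl hzC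
              · refine Or.inr (hfrK y ⟨hz, ?_⟩)
                rwa [(hKopen.connectedComponentIn).interior_eq]
            rcases hcc h with h2 | h2
            · -- x ∈ component y and x ∈ U = component p ⇒ y ∈ U, contradiction
              have h4 : connectedComponentIn Kᶜ y = U := by
                rw [connectedComponentIn_eq h2, hUdef, connectedComponentIn_eq hxU]
              exact hyUc (h4 ▸ mem_connectedComponentIn hyK)
            · exact (hUK hxU) h2
          · -- y ∈ K : component is empty
            rw [connectedComponentIn_eq_empty hyK] at h
            simp at h
    rw [hrepr]
    apply isPreconnected_sUnion k₀
    · rintro s ⟨y, hy, rfl⟩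
      exact Or.inl hk₀
    · rintro s ⟨y, hy, rfl⟩
      show IsPreconnected (K ∪ closure (connectedComponentIn Kᶜ y))
      by_cases hyK : y ∈ Kᶜ
      · have h1 : IsPreconnected (closure (connectedComponentIn Kᶜ y)) :=
          isPreconnected_connectedComponentIn.closure
        have h2 : (frontier (connectedComponentIn Kᶜ y)).Nonempty := hfrne y hyK
        obtain ⟨z, hz⟩ := h2
        exact IsPreconnected.union z (hfrK y hz) hz.1 hKconn.isPreconnected h1
      · rw [connectedComponentIn_eq_empty hyK]
        simpa using hKconn.isPreconnected
  -- apply unicoherence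
  have hfr_eq : frontier U = closure U ∩ Uᶜ := by
    rw [frontier, hUopen.interior_eq]; rfl
  have hpc : IsPreconnected (closure U ∩ Uᶜ) := by
    apply plane_unicoherence isClosed_closure hUopen.isClosed_compl
      hUpc.closure hBpc
    rw [eq_univ_iff_forall]
    intro x
    by_cases hxU : x ∈ U
    · exact Or.inl (subset_closure hxU)
    · exact Or.inr hxU
  rw [hfr_eq]
  exact ⟨hfr_eq ▸ hfrUne, hpc⟩
end

section
/- Let X be a compact metric space and suppose for every ε > 0 at most finitely many connected components of X have diameter greater than ε. If (x_n), (y_n) are sequences in X with x_n and y_n in the same component for each n, x_n → x, y_n → y, and x ≠ y, then there is a single component of X containing x_n and y_n for infinitely many n. -/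
/-- In a compact metric space with only finitely many connected components of diameter
greater than any `ε > 0`: if `xₙ` and `yₙ` lie in the same component for each `n`,
`xₙ → x`, `yₙ → y` and `x ≠ y`, then some single component contains `xₙ` and `yₙ` for
infinitely many `n`. -/
theorem pigeonhole_components {X : Type*} [MetricSpace X] [CompactSpace X]
    (hfin : ∀ ε : ℝ, 0 < ε →
      {S : Set X | (∃ p : X, S = connectedComponent p) ∧ ε < Metric.diam S}.Finite)
    (x y : ℕ → X) (hsame : ∀ n, connectedComponent (x n) = connectedComponent (y n))
    (a b : X) (hx : Filter.Tendsto x Filter.atTop (nhds a))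
    (hy : Filter.Tendsto y Filter.atTop (nhds b)) (hab : a ≠ b) :
    ∃ S : Set X, (∃ p : X, S = connectedComponent p) ∧
      {n : ℕ | x n ∈ S ∧ y n ∈ S}.Infinite := by
  have hd : 0 < dist a b := dist_pos.mpr hab
  set ε : ℝ := dist a b / 4 with hε
  have hεpos : 0 < ε := by positivity
  obtain ⟨N1, hN1⟩ := (Metric.tendsto_atTop.mp hx) ε hεpos
  obtain ⟨N2, hN2⟩ := (Metric.tendsto_atTop.mp hy) ε hεpos
  set N := max N1 N2
  -- For n ≥ N, the component of x n has diameter > ε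
  have hbig : ∀ n, N ≤ n → ε < Metric.diam (connectedComponent (x n)) := by
    intro n hn
    have h1 : dist (x n) a < ε := hN1 n (le_trans (le_max_left _ _) hn)
    have h2 : dist (y n) b < ε := hN2 n (le_trans (le_max_right _ _) hn)
    have hdist : 2 * ε < dist (x n) (y n) := by
      have := dist_triangle4 a (x n) (y n) b
      have h1' : dist a (x n) < ε := by rwa [dist_comm]
      nlinarith [dist_nonneg (α := X) (x := x n) (y := y n)]
    have hmemx : x n ∈ connectedComponent (x n) := mem_connectedComponent
    have hmemy : y n ∈ connectedComponent (x n) := by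
      rw [hsame n]; exact mem_connectedComponent
    have hb : Bornology.IsBounded (connectedComponent (x n)) :=
      isCompact_univ.isBounded.subset (Set.subset_univ _)
    have := Metric.dist_le_diam_of_mem hb hmemx hmemy
    linarith
  have hF := hfin ε hεpos
  -- pigeonhole: infinitely many n ≥ N mapped into finite set of components
  by_contra hcon
  push_neg at hcon
  have : {n : ℕ | N ≤ n} ⊆ ⋃ S ∈ {S : Set X |
      (∃ p : X, S = connectedComponent p) ∧ ε < Metric.diam S},
      {n : ℕ | x n ∈ S ∧ y n ∈ S} := by
    intro n hn
    refine Set.mem_biUnion ⟨⟨x n, rfl⟩, hbig n hn⟩ ?_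
    exact ⟨mem_connectedComponent, by rw [hsame n]; exact mem_connectedComponent⟩
  have hfin2 : {n : ℕ | N ≤ n}.Finite := by
    refine Set.Finite.subset (hF.biUnion fun S hS => ?_) this
    have := hcon S hS.1
    exact this
  have : {n : ℕ | N ≤ n}.Infinite := by
    apply Set.infinite_of_not_bddAbove
    rintro ⟨m, hm⟩
    have := hm (show N ≤ max N (m+1) from le_max_left _ _)
    omega
  exact this hfin2
end
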